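/- arXiv:2604.17334 — 4 statements merged into one kernel-verified Lean document; each statement's English description precedes it below -/
import Mathlib

section
/- Let λ : [0,∞)×[−1,1] → ℝ be Lipschitz with λ(t,x) ≥ λ_m for a constant λ_m > 0. For every t ≥ 0 and x ∈ [−1,1] there exist a unique time t_b ∈ [0,t] and a unique C¹ curve X : [t_b, t] → [−1,1] such that X(t) = x, X′(τ) = λ(τ, X(τ)) for all τ ∈ [t_b, t], and either t_b = 0 or X(t_b) = −1. Moreover t_b = t if and only if x = −1 or t = 0. -/
open Set

/-- (Backward exit time.) Let `λ` be Lipschitz on `[0,∞)×[−1,1]` with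
`λ ≥ λ_m > 0`. For every `t ≥ 0` and `x ∈ [−1,1]` there exist a unique time
`t_b ∈ [0,t]` and a unique `C¹` curve `X : [t_b,t] → [−1,1]` with `X(t) = x`,
`X′(τ) = λ(τ, X(τ))` on `[t_b,t]`, and either `t_b = 0` or `X(t_b) = −1`.
Moreover `t_b = t` if and only if `x = −1` or `t = 0`. -/
theorem stmt1 (lm : ℝ) (hlm : 0 < lm) (lam : ℝ → ℝ → ℝ) (K : NNReal)
    (hlip : LipschitzOnWith K (fun p : ℝ × ℝ => lam p.1 p.2)
      (Set.Ici (0 : ℝ) ×ˢ Set.Icc (-1 : ℝ) 1))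
    (hlow : ∀ t ∈ Set.Ici (0 : ℝ), ∀ x ∈ Set.Icc (-1 : ℝ) 1, lm ≤ lam t x) :
    ∀ t ∈ Set.Ici (0 : ℝ), ∀ x ∈ Set.Icc (-1 : ℝ) 1,
      ∃ tb : ℝ, ∃ X : ℝ → ℝ,
        tb ∈ Set.Icc 0 t ∧
        (∀ τ ∈ Set.Icc tb t, X τ ∈ Set.Icc (-1 : ℝ) 1 ∧
          HasDerivWithinAt X (lam τ (X τ)) (Set.Icc tb t) τ) ∧
        X t = x ∧
        (tb = 0 ∨ X tb = -1) ∧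
        (tb = t ↔ (x = -1 ∨ t = 0)) ∧
        (∀ tb' : ℝ, ∀ X' : ℝ → ℝ,
          tb' ∈ Set.Icc 0 t →
          (∀ τ ∈ Set.Icc tb' t, X' τ ∈ Set.Icc (-1 : ℝ) 1 ∧
            HasDerivWithinAt X' (lam τ (X' τ)) (Set.Icc tb' t) τ) →
          X' t = x →
          (tb' = 0 ∨ X' tb' = -1) →
          tb' = tb ∧ ∀ τ ∈ Set.Icc tb t, X' τ = X τ) := by
  obtain ⟨g, hg, hgeq⟩ := hlip.extend_real
  intro t ht x hx
  have ht0 : (0:ℝ) ≤ t := ht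
  have hK0 : (0:ℝ) ≤ K := K.2
  set M : ℝ := |g (t, x)| + K * (t + 2) + lm with hMdef
  have hMlm : lm ≤ M := by nlinarith [abs_nonneg (g (t, x))]
  have hM0 : 0 < M := lt_of_lt_of_le hlm hMlm
  set L : ℝ × ℝ → ℝ := fun p => max (min (g p) M) lm with hLdef
  have hLlip : LipschitzWith K L := (hg.min_const M).max_const lm
  have hLlm : ∀ p, lm ≤ L p := fun p => le_max_right _ _
  have hLM : ∀ p, L p ≤ M := fun p => max_le (min_le_right _ _) hMlm
  have habs : ∀ p, |L p| ≤ M := fun p => abs_le.2 ⟨by linarith [hLlm p], hLM p⟩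
  -- L agrees with lam on [0,t] × [-1,1]
  have hLeq : ∀ τ ∈ Icc (0:ℝ) t, ∀ y ∈ Icc (-1:ℝ) 1, L (τ, y) = lam τ y := by
    intro τ hτ y hy
    have hmem : ((τ, y) : ℝ × ℝ) ∈ (Ici (0:ℝ)) ×ˢ (Icc (-1:ℝ) 1) := ⟨hτ.1, hy⟩
    have h1 : lam τ y = g (τ, y) := hgeq hmem
    have hd : dist ((τ, y) : ℝ × ℝ) (t, x) ≤ t + 2 := by
      rw [Prod.dist_eq]
      apply max_le
      · rw [Real.dist_eq]
        rw [abs_le]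
        constructor <;> [linarith [hτ.1, hτ.2]; linarith [hτ.1, hτ.2]]
      · rw [Real.dist_eq]
        rw [abs_le]
        constructor <;> [linarith [hy.1, hy.2, hx.1, hx.2]; linarith [hy.1, hy.2, hx.1, hx.2]]
    have hgd : dist (g (τ, y)) (g (t, x)) ≤ K * (t + 2) :=
      le_trans (hg.dist_le_mul _ _) (by exact mul_le_mul_of_nonneg_left hd hK0)
    have hle : g (τ, y) ≤ M := by
      have := abs_sub_abs_le_abs_sub (g (τ, y)) (g (t, x))
      rw [Real.dist_eq] at hgd
      have : g (τ, y) ≤ |g (τ, y)| := le_abs_self _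
      have h2 : |g (τ, y)| ≤ |g (t, x)| + K * (t + 2) := by
        have := abs_sub_abs_le_abs_sub (g (τ, y)) (g (t, x))
        linarith
      linarith
    have hge : lm ≤ g (τ, y) := h1 ▸ hlow τ hτ.1 y hy
    simp only [hLdef]
    rw [min_eq_left hle, max_eq_left hge, h1]
  -- Picard-Lindelöf: global solution on [0, t] with terminal condition Y t = x
  have hpl : IsPicardLindelof (fun τ y => L (τ, y)) (⟨t, right_mem_Icc.2 ht0⟩ : Icc (0:ℝ) t) x
      ⟨M * t, by positivity⟩ 0 ⟨M, hM0.le⟩ K := by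
    constructor
    · intro τ _
      have h1 : LipschitzWith K (fun y : ℝ => L (τ, y)) := by
        simpa [Function.comp_def] using hLlip.comp (LipschitzWith.prodMk_left τ)
      exact h1.lipschitzOnWith
    · intro y _
      exact (hLlip.continuous.comp (Continuous.prodMk continuous_id continuous_const)).continuousOn
    · intro τ _ y _
      rw [Real.norm_eq_abs]; exact habs _
    · have : max (t - t) (t - 0) = t := by
        rw [sub_self, sub_zero, max_eq_right ht0]
      change M * max (t - t) (t - 0) ≤ _
      rw [this]
      simp
      exact le_rfl
  obtain ⟨Y, hYt, hYderiv⟩ := hpl.exists_eq_forall_mem_Icc_hasDerivWithinAt₀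
  replace hYt : Y t = x := hYt
  have hYcont : ContinuousOn Y (Icc 0 t) := fun τ hτ => (hYderiv τ hτ).continuousWithinAt
  -- growth bound: lm * (b - a) ≤ Y b - Y a
  have hgrow : ∀ a ∈ Icc (0:ℝ) t, ∀ b ∈ Icc (0:ℝ) t, a ≤ b → lm * (b - a) ≤ Y b - Y a := by
    have hdiff : DifferentiableOn ℝ Y (interior (Icc (0:ℝ) t)) := by
      intro τ hτ
      rw [interior_Icc] at hτ
      exact ((hYderiv τ (Ioo_subset_Icc_self hτ)).hasDerivAt
        (Icc_mem_nhds hτ.1 hτ.2)).differentiableAt.differentiableWithinAt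
    have hbound : ∀ τ ∈ interior (Icc (0:ℝ) t), lm ≤ deriv Y τ := by
      intro τ hτ
      rw [interior_Icc] at hτ
      rw [((hYderiv τ (Ioo_subset_Icc_self hτ)).hasDerivAt (Icc_mem_nhds hτ.1 hτ.2)).deriv]
      exact hLlm _
    exact fun a ha b hb hab =>
      (convex_Icc 0 t).mul_sub_le_image_sub_of_le_deriv hYcont hdiff hbound a ha b hb hab
  -- uniqueness of solutions: any admissible (tb', X') coincides with Y on [tb', t]
  have huniq : ∀ tb' : ℝ, ∀ X' : ℝ → ℝ,
      tb' ∈ Icc 0 t →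
      (∀ τ ∈ Icc tb' t, X' τ ∈ Icc (-1:ℝ) 1 ∧
        HasDerivWithinAt X' (lam τ (X' τ)) (Icc tb' t) τ) →
      X' t = x → EqOn X' Y (Icc tb' t) := by
    intro tb' X' htb' hX' hX't
    have hsub : Icc tb' t ⊆ Icc 0 t := Icc_subset_Icc_left htb'.1
    have hv : ∀ τ : ℝ, LipschitzOnWith K (fun y => L (τ, y)) (univ : Set ℝ) := by
      intro τ
      have h1 : LipschitzWith K (fun y : ℝ => L (τ, y)) := by
        simpa [Function.comp_def] using hLlip.comp (LipschitzWith.prodMk_left τ)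
      exact h1.lipschitzOnWith
    refine ODE_solution_unique_of_mem_Icc_left (v := fun τ y => L (τ, y))
      (s := fun _ => (univ : Set ℝ)) (fun τ _ => hv τ)
      (fun τ hτ => (hX' τ hτ).2.continuousWithinAt) ?_ (fun τ _ => mem_univ _)
      (hYcont.mono hsub) ?_ (fun τ _ => mem_univ _) (by rw [hX't, hYt])
    · intro τ hτ
      have hτ' : τ ∈ Icc tb' t := ⟨le_of_lt hτ.1, hτ.2⟩
      have hder := (hX' τ hτ').2
      have hmem : Icc tb' t ∈ nhdsWithin τ (Iic τ) :=
        Filter.mem_of_superset (Icc_mem_nhdsLE_of_mem ⟨hτ.1, le_refl τ⟩)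
          (Icc_subset_Icc_right hτ.2)
      have := hder.mono_of_mem_nhdsWithin hmem
      have heq : L (τ, X' τ) = lam τ (X' τ) := hLeq τ (hsub hτ') _ (hX' τ hτ').1
      show HasDerivWithinAt X' (L (τ, X' τ)) (Iic τ) τ
      rw [heq]
      exact this
    · intro τ hτ
      have hτ0 : 0 < τ := lt_of_le_of_lt htb'.1 hτ.1
      have hτ' : τ ∈ Icc (0:ℝ) t := ⟨le_of_lt hτ0, hτ.2⟩
      have hmem : Icc (0:ℝ) t ∈ nhdsWithin τ (Iic τ) :=
        Filter.mem_of_superset (Icc_mem_nhdsLE_of_mem ⟨hτ0, le_refl τ⟩)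
          (Icc_subset_Icc_right hτ.2)
      exact (hYderiv τ hτ').mono_of_mem_nhdsWithin hmem
  by_cases hc : (-1:ℝ) ≤ Y 0
  · -- case: the solution stays above -1 at time 0, take tb = 0
    refine ⟨0, Y, ⟨le_refl 0, ht0⟩, ?_, hYt, Or.inl rfl, ?_, ?_⟩
    · intro τ hτ
      have hmem : Y τ ∈ Icc (-1:ℝ) 1 := by
        constructor
        · have h1 := hgrow 0 ⟨le_refl 0, ht0⟩ τ hτ hτ.1
          have h2 : 0 ≤ lm * (τ - 0) := mul_nonneg hlm.le (by linarith [hτ.1])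
          linarith
        · have h1 := hgrow τ hτ t (right_mem_Icc.2 ht0) hτ.2
          rw [hYt] at h1
          have h2 : 0 ≤ lm * (t - τ) := mul_nonneg hlm.le (by linarith [hτ.2])
          linarith [hx.2]
      refine ⟨hmem, ?_⟩
      have h3 := hYderiv τ hτ
      rw [hLeq τ hτ _ hmem] at h3
      exact h3
    · constructor
      · intro h0
        right
        exact h0.symm
      · rintro (hxm | ht0')
        · by_contra hne
          have htpos : 0 < t := lt_of_le_of_ne ht0 hne
          have h1 := hgrow 0 ⟨le_refl 0, ht0⟩ t (right_mem_Icc.2 ht0) ht0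
          rw [hYt, hxm] at h1
          have h2 : 0 < lm * (t - 0) := mul_pos hlm (by linarith)
          linarith
        · exact ht0'.symm
    · intro tb' X' htb' hX' hX't hbc
      have heq := huniq tb' X' htb' hX' hX't
      have htb'0 : tb' = 0 := by
        rcases hbc with h | h
        · exact h
        · by_contra hne
          have h0 : 0 < tb' := lt_of_le_of_ne htb'.1 (Ne.symm hne)
          have hYtb' : Y tb' = -1 := by
            rw [← heq (left_mem_Icc.2 htb'.2)]
            exact h
          have h1 := hgrow 0 ⟨le_refl 0, ht0⟩ tb' ⟨htb'.1, htb'.2⟩ htb'.1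
          rw [hYtb'] at h1
          have h2 : 0 < lm * (tb' - 0) := mul_pos hlm (by linarith)
          linarith
      subst htb'0
      exact ⟨rfl, fun τ hτ => heq hτ⟩
  · -- case: Y 0 < -1, exit time given by intermediate value theorem
    push_neg at hc
    have htne : t ≠ 0 := by
      intro h0
      rw [h0] at hYt
      linarith [hx.1, hYt ▸ hc]
    have htpos : 0 < t := lt_of_le_of_ne ht0 (Ne.symm htne)
    have hivt : (-1:ℝ) ∈ Y '' Icc 0 t := by
      apply intermediate_value_Icc ht0 hYcont
      rw [hYt]
      exact ⟨hc.le, hx.1⟩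
    obtain ⟨tb, htb, hYtb⟩ := hivt
    refine ⟨tb, Y, htb, ?_, hYt, Or.inr hYtb, ?_, ?_⟩
    · intro τ hτ
      have hτ0 : τ ∈ Icc (0:ℝ) t := ⟨le_trans htb.1 hτ.1, hτ.2⟩
      have hmem : Y τ ∈ Icc (-1:ℝ) 1 := by
        constructor
        · have h1 := hgrow tb htb τ hτ0 hτ.1
          rw [hYtb] at h1
          have h2 : 0 ≤ lm * (τ - tb) := mul_nonneg hlm.le (by linarith [hτ.1])
          linarith
        · have h1 := hgrow τ hτ0 t (right_mem_Icc.2 ht0) hτ.2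
          rw [hYt] at h1
          have h2 : 0 ≤ lm * (t - τ) := mul_nonneg hlm.le (by linarith [hτ.2])
          linarith [hx.2]
      refine ⟨hmem, ?_⟩
      have h3 := (hYderiv τ hτ0).mono (Icc_subset_Icc_left htb.1)
      rw [hLeq τ hτ0 _ hmem] at h3
      exact h3
    · constructor
      · intro h
        left
        rw [← hYt, ← h]
        exact hYtb
      · rintro (hxm | h0)
        · rcases eq_or_lt_of_le htb.2 with h | h
          · exact h
          · exfalso
            have h1 := hgrow tb htb t (right_mem_Icc.2 ht0) htb.2
            rw [hYt, hYtb, hxm] at h1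
            have h2 : 0 < lm * (t - tb) := mul_pos hlm (by linarith)
            linarith
        · exact absurd h0 htne
    · intro tb' X' htb' hX' hX't hbc
      have heq := huniq tb' X' htb' hX' hX't
      have htbeq : tb' = tb := by
        rcases hbc with h | h
        · exfalso
          subst h
          have hm := (hX' 0 (left_mem_Icc.2 ht0)).1
          rw [heq (left_mem_Icc.2 ht0)] at hm
          linarith [hm.1]
        · have hYtb' : Y tb' = -1 := by
            rw [← heq (left_mem_Icc.2 htb'.2)]
            exact h
          rcases lt_trichotomy tb' tb with hlt | heq2 | hgt
          · exfalso
            have h1 := hgrow tb' htb' tb htb hlt.le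
            rw [hYtb, hYtb'] at h1
            have h2 : 0 < lm * (tb - tb') := mul_pos hlm (by linarith)
            linarith
          · exact heq2
          · exfalso
            have h1 := hgrow tb htb tb' htb' hgt.le
            rw [hYtb, hYtb'] at h1
            have h2 : 0 < lm * (tb' - tb) := mul_pos hlm (by linarith)
            linarith
      subst htbeq
      exact ⟨rfl, fun τ hτ => heq hτ⟩
end

section
/- Let λ_m > 0, α > 0, and set w(x) = e^{−αx}. Let λ : [0,∞)×[−1,1] → ℝ be Lipschitz with λ(t,x) ≥ λ_m, and let f : [0,∞)×[−1,1] → ℝ be a bounded C¹ function; set h = ∂_t f + λ ∂_x f. Then for every t ≥ 0 and x ∈ [−1,1]: w(x)|f(t,x)| ≤ max( sup_{y∈[−1,1]} w(y)|f(0,y)| , sup_{0≤s≤t} w(−1)|f(s,−1)| ) + (1/(α λ_m)) sup_{0≤s≤t, y∈[−1,1]} w(y)|h(s,y)|. -/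
open Set


private lemma slope_deriv_ge {φ : ℝ → ℝ} {a c ε v : ℝ} (hc : c < a)
    (hφ : HasDerivAt φ v a)
    (h : ∀ s, c < s → s < a → φ s - φ a ≤ ε * (s - a)) : ε ≤ v := by
  have ht : Filter.Tendsto (slope φ a) (nhdsWithin a (Set.Iio a)) (nhds v) :=
    (hasDerivAt_iff_tendsto_slope.mp hφ).mono_left
      (nhdsWithin_mono a fun s hs => ne_of_lt hs)
  refine ge_of_tendsto ht ?_
  filter_upwards [Ioo_mem_nhdsLT_of_mem (Set.mem_Ioc.mpr ⟨hc, le_rfl⟩)] with s hs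
  have hsa : s - a < 0 := sub_neg.mpr hs.2
  rw [slope_def_field, le_div_iff_of_neg hsa]
  exact h s hs.1 hs.2

private lemma hasDerivAt_fst {f : ℝ → ℝ → ℝ} (hf : ContDiff ℝ 1 fun p : ℝ × ℝ => f p.1 p.2)
    (s y : ℝ) :
    HasDerivAt (fun u => f u y)
      (fderiv ℝ (fun p : ℝ × ℝ => f p.1 p.2) (s, y) (1, 0)) s := by
  have h1 := (hf.differentiable one_ne_zero (s, y)).hasFDerivAt
  have h2 : HasDerivAt (fun u : ℝ => (u, y)) ((1 : ℝ), (0 : ℝ)) s :=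
    HasDerivAt.prodMk (hasDerivAt_id s) (hasDerivAt_const s y)
  exact h1.comp_hasDerivAt s h2

private lemma hasDerivAt_snd {f : ℝ → ℝ → ℝ} (hf : ContDiff ℝ 1 fun p : ℝ × ℝ => f p.1 p.2)
    (s y : ℝ) :
    HasDerivAt (fun z => f s z)
      (fderiv ℝ (fun p : ℝ × ℝ => f p.1 p.2) (s, y) (0, 1)) y := by
  have h1 := (hf.differentiable one_ne_zero (s, y)).hasFDerivAt
  have h2 : HasDerivAt (fun z : ℝ => (s, z)) ((0 : ℝ), (1 : ℝ)) y :=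
    HasDerivAt.prodMk (hasDerivAt_const y s) (hasDerivAt_id y)
  exact h1.comp_hasDerivAt y h2

private lemma cont_pd1 {f : ℝ → ℝ → ℝ} (hf : ContDiff ℝ 1 fun p : ℝ × ℝ => f p.1 p.2) :
    Continuous fun p : ℝ × ℝ => deriv (fun u => f u p.2) p.1 := by
  have : (fun p : ℝ × ℝ => deriv (fun u => f u p.2) p.1)
      = fun p => fderiv ℝ (fun q : ℝ × ℝ => f q.1 q.2) p ((1 : ℝ), (0 : ℝ)) := by
    funext p; exact (hasDerivAt_fst hf p.1 p.2).deriv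
  rw [this]
  exact (hf.continuous_fderiv one_ne_zero).clm_apply continuous_const

private lemma cont_pd2 {f : ℝ → ℝ → ℝ} (hf : ContDiff ℝ 1 fun p : ℝ × ℝ => f p.1 p.2) :
    Continuous fun p : ℝ × ℝ => deriv (fun z => f p.1 z) p.2 := by
  have : (fun p : ℝ × ℝ => deriv (fun z => f p.1 z) p.2)
      = fun p => fderiv ℝ (fun q : ℝ × ℝ => f q.1 q.2) p ((0 : ℝ), (1 : ℝ)) := by
    funext p; exact (hasDerivAt_snd hf p.1 p.2).deriv
  rw [this]
  exact (hf.continuous_fderiv one_ne_zero).clm_apply continuous_const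

private lemma bdd_of_cont {s : Set ℝ} (hs : IsCompact s) (hne : s.Nonempty) {g : ℝ → ℝ}
    (hg : ContinuousOn g s) : BddAbove (Set.range fun y : s => g y) := by
  obtain ⟨z, hz, hmax⟩ := hs.exists_isMaxOn hne hg
  exact ⟨g z, by rintro v ⟨y, rfl⟩; exact hmax y.2⟩

private lemma bdd_of_cont2 {s t : Set ℝ} (hs : IsCompact s) (ht : IsCompact t)
    (hsne : s.Nonempty) (htne : t.Nonempty) {g : ℝ × ℝ → ℝ}
    (hg : ContinuousOn g (s ×ˢ t)) :
    BddAbove (Set.range fun q : s × t => g (↑q.1, ↑q.2)) := by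
  obtain ⟨z, hz, hmax⟩ := (hs.prod ht).exists_isMaxOn (hsne.prod htne) hg
  exact ⟨g z, by rintro v ⟨q, rfl⟩; exact hmax (Set.mk_mem_prod q.1.2 q.2.2)⟩

/-- Weighted `L^∞` estimate for the transport inflow problem on
`I = (−1,1)` with inflow boundary `{−1}`: for `λ ≥ λ_m > 0` Lipschitz, `w(x) = e^{−αx}`,
`f` bounded `C¹` and `h = ∂_t f + λ ∂_x f`, one has for all `t ≥ 0`, `x ∈ [−1,1]`:
`w(x)|f(t,x)| ≤ max(sup_y w(y)|f(0,y)|, sup_{0≤s≤t} w(−1)|f(s,−1)|)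
  + (1/(αλ_m)) · sup_{0≤s≤t, y} w(y)|h(s,y)|`. -/
theorem stmt5 (lm α : ℝ) (hlm : 0 < lm) (hα : 0 < α) (lam f : ℝ → ℝ → ℝ) (K : NNReal)
    (hlip : LipschitzOnWith K (fun p : ℝ × ℝ => lam p.1 p.2)
      (Set.Ici (0 : ℝ) ×ˢ Set.Icc (-1 : ℝ) 1))
    (hlow : ∀ t ∈ Set.Ici (0 : ℝ), ∀ x ∈ Set.Icc (-1 : ℝ) 1, lm ≤ lam t x)
    (hf : ContDiff ℝ 1 (fun p : ℝ × ℝ => f p.1 p.2))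
    (hbdd : ∃ M : ℝ, ∀ t ∈ Set.Ici (0 : ℝ), ∀ x ∈ Set.Icc (-1 : ℝ) 1, |f t x| ≤ M) :
    ∀ t ∈ Set.Ici (0 : ℝ), ∀ x ∈ Set.Icc (-1 : ℝ) 1,
      Real.exp (-α * x) * |f t x| ≤
        max (⨆ y : Set.Icc (-1 : ℝ) 1, Real.exp (-α * (y : ℝ)) * |f 0 y|)
            (⨆ s : Set.Icc (0 : ℝ) t, Real.exp (-α * (-1 : ℝ)) * |f (s : ℝ) (-1)|)
        + (1 / (α * lm)) *
            ⨆ q : Set.Icc (0 : ℝ) t × Set.Icc (-1 : ℝ) 1,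
              Real.exp (-α * (q.2 : ℝ)) *
                |deriv (fun s => f s (q.2 : ℝ)) (q.1 : ℝ)
                  + lam (q.1 : ℝ) (q.2 : ℝ) * deriv (fun y => f (q.1 : ℝ) y) (q.2 : ℝ)| := by
  intro t ht x hx
  rw [Set.mem_Ici] at ht
  have hFc : Continuous (fun p : ℝ × ℝ => f p.1 p.2) := hf.continuous
  set A1 : ℝ := ⨆ y : Set.Icc (-1 : ℝ) 1, Real.exp (-α * (y : ℝ)) * |f 0 y| with hA1def
  set A2 : ℝ := ⨆ s : Set.Icc (0 : ℝ) t, Real.exp (-α * (-1 : ℝ)) * |f (s : ℝ) (-1)| with hA2def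
  set H : ℝ := ⨆ q : Set.Icc (0 : ℝ) t × Set.Icc (-1 : ℝ) 1,
      Real.exp (-α * (q.2 : ℝ)) *
        |deriv (fun s => f s (q.2 : ℝ)) (q.1 : ℝ)
          + lam (q.1 : ℝ) (q.2 : ℝ) * deriv (fun y => f (q.1 : ℝ) y) (q.2 : ℝ)| with hHdef
  set B : ℝ := max A1 A2 + (1 / (α * lm)) * H with hBdef
  -- bddAbove facts
  have hIne : (Set.Icc (-1 : ℝ) 1).Nonempty := ⟨0, by norm_num⟩
  have hJne : (Set.Icc (0 : ℝ) t).Nonempty := ⟨0, by constructor <;> [rfl; exact ht]⟩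
  have hb1 : BddAbove (Set.range fun y : Set.Icc (-1 : ℝ) 1 =>
      Real.exp (-α * (y : ℝ)) * |f 0 y|) := by
    refine bdd_of_cont (g := fun y : ℝ => Real.exp (-α * y) * |f 0 y|)
      isCompact_Icc hIne (Continuous.continuousOn ?_)
    exact ((Real.continuous_exp.comp (continuous_const.mul continuous_id)).mul
      ((hFc.comp (continuous_const.prodMk continuous_id)).abs))
  have hb2 : BddAbove (Set.range fun s : Set.Icc (0 : ℝ) t =>
      Real.exp (-α * (-1 : ℝ)) * |f (s : ℝ) (-1)|) := by
    refine bdd_of_cont (g := fun s : ℝ => Real.exp (-α * (-1 : ℝ)) * |f s (-1)|)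
      isCompact_Icc hJne (Continuous.continuousOn ?_)
    exact continuous_const.mul ((hFc.comp (continuous_id.prodMk continuous_const)).abs)
  have hlamC : ContinuousOn (fun p : ℝ × ℝ => lam p.1 p.2)
      (Set.Icc (0 : ℝ) t ×ˢ Set.Icc (-1 : ℝ) 1) :=
    hlip.continuousOn.mono (Set.prod_mono Set.Icc_subset_Ici_self le_rfl)
  have hbH : BddAbove (Set.range fun q : Set.Icc (0 : ℝ) t × Set.Icc (-1 : ℝ) 1 =>
      Real.exp (-α * (q.2 : ℝ)) *
        |deriv (fun s => f s (q.2 : ℝ)) (q.1 : ℝ)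
          + lam (q.1 : ℝ) (q.2 : ℝ) * deriv (fun y => f (q.1 : ℝ) y) (q.2 : ℝ)|) := by
    refine bdd_of_cont2 isCompact_Icc isCompact_Icc hJne hIne
      (g := fun p : ℝ × ℝ => Real.exp (-α * p.2) *
        |deriv (fun u => f u p.2) p.1 + lam p.1 p.2 * deriv (fun z => f p.1 z) p.2|) ?_
    exact ((Real.continuous_exp.comp (continuous_const.mul continuous_snd)).continuousOn.mul
      (((cont_pd1 hf).continuousOn.add (hlamC.mul (cont_pd2 hf).continuousOn)).abs))
  have hA1nn : 0 ≤ A1 := Real.iSup_nonneg fun y => by positivity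
  have hHnn : 0 ≤ H := Real.iSup_nonneg fun q => by positivity
  have hAnn : 0 ≤ max A1 A2 := le_trans hA1nn (le_max_left _ _)
  have hHB : (1 / (α * lm)) * H ≤ B := by
    rw [hBdef]; linarith
  -- key claim with slack ε
  have key : ∀ ε : ℝ, 0 < ε →
      Real.exp (-α * x) * |f t x| ≤ B + ε * (1 + t) := by
    intro ε hε
    by_contra hcon
    push_neg at hcon
    set U : ℝ × ℝ → ℝ := fun p => Real.exp (-α * p.2) * |f p.1 p.2| with hUdef
    have hUc : Continuous U := by
      exact (Real.continuous_exp.comp (continuous_const.mul continuous_snd)).mul hFc.abs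
    set T : Set (ℝ × ℝ) := (Set.Icc (0 : ℝ) t ×ˢ Set.Icc (-1 : ℝ) 1) ∩
      {p : ℝ × ℝ | B + ε * (1 + p.1) ≤ U p} with hTdef
    have hTc : IsCompact T := (isCompact_Icc.prod isCompact_Icc).inter_right
      (isClosed_le (by fun_prop) hUc)
    have hTne : T.Nonempty := ⟨(t, x), ⟨⟨ht, le_rfl⟩, hx⟩, hcon.le⟩
    set S : Set ℝ := Prod.fst '' T with hSdef
    have hSc : IsCompact S := hTc.image continuous_fst
    have hSne : S.Nonempty := hTne.image _
    obtain ⟨p, hpT, hps⟩ := hSc.sInf_mem hSne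
    set s₀ : ℝ := sInf S with hs₀def
    obtain ⟨⟨hp1, hp2⟩, hpU⟩ := hpT
    have hs0 : 0 ≤ s₀ := hps ▸ hp1.1
    have hst : s₀ ≤ t := hps ▸ hp1.2
    -- s₀ > 0
    have hspos : 0 < s₀ := by
      rcases lt_or_eq_of_le hs0 with h | h
      · exact h
      · exfalso
        have h01 : Real.exp (-α * (p.2 : ℝ)) * |f 0 p.2| ≤ A1 :=
          le_ciSup hb1 (⟨p.2, hp2⟩ : Set.Icc (-1 : ℝ) 1)
        have hp10 : p.1 = 0 := by rw [hps, ← h]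
        have : B + ε * (1 + p.1) ≤ U p := hpU
        rw [hp10] at this
        have hUp : U p = Real.exp (-α * p.2) * |f 0 p.2| := by
          rw [hUdef]; simp [hp10]
        rw [hUp] at this
        have : A1 ≤ max A1 A2 := le_max_left _ _
        have hB0 : 0 ≤ (1 / (α * lm)) * H := by positivity
        rw [hBdef] at *
        nlinarith [le_max_left A1 A2]
    -- for s < s₀ nothing in T
    have hnotS : ∀ s : ℝ, 0 ≤ s → s < s₀ → ∀ y ∈ Set.Icc (-1 : ℝ) 1,
        U (s, y) < B + ε * (1 + s) := by
      intro s hs hss y hy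
      by_contra hge
      push_neg at hge
      have hmemT : (s, y) ∈ T := ⟨⟨⟨hs, le_trans hss.le hst⟩, hy⟩, hge⟩
      have : s₀ ≤ s := csInf_le hSc.bddBelow ⟨(s, y), hmemT, rfl⟩
      exact absurd this (not_le.mpr hss)
    -- maximizer in x at time s₀
    obtain ⟨x₀, hx₀I, hx₀max⟩ := isCompact_Icc.exists_isMaxOn hIne
      (hUc.comp (continuous_const.prodMk continuous_id)).continuousOn
      (f := fun y : ℝ => U (s₀, y))
    have hmax : ∀ y ∈ Set.Icc (-1 : ℝ) 1, U (s₀, y) ≤ U (s₀, x₀) := fun y hy => hx₀max hy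
    have hU0 : B + ε * (1 + s₀) ≤ U (s₀, x₀) := by
      have h1 : U (s₀, p.2) = U p := by rw [hUdef]; simp [hps]
      calc B + ε * (1 + s₀) = B + ε * (1 + p.1) := by rw [hps]
        _ ≤ U p := hpU
        _ = U (s₀, p.2) := h1.symm
        _ ≤ U (s₀, x₀) := hmax p.2 hp2
    -- x₀ > -1
    have hx₀gt : -1 < x₀ := by
      rcases lt_or_eq_of_le hx₀I.1 with h | h
      · exact h
      · exfalso
        have h2 : U (s₀, -1) ≤ A2 :=
          le_ciSup hb2 (⟨s₀, hs0, hst⟩ : Set.Icc (0 : ℝ) t)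
        rw [← h] at hU0
        have h3 : A2 ≤ max A1 A2 := le_max_right _ _
        have hB0 : 0 ≤ (1 / (α * lm)) * H := by positivity
        rw [hBdef] at hU0
        nlinarith
    -- sign
    have hU0pos : 0 < U (s₀, x₀) := by
      have : 0 < ε * (1 + s₀) := by nlinarith
      have hB0 : 0 ≤ B := by rw [hBdef]; positivity
      linarith
    have hfne : f s₀ x₀ ≠ 0 := by
      intro h0
      rw [hUdef] at hU0pos
      simp [h0] at hU0pos
    set σ : ℝ := if 0 < f s₀ x₀ then 1 else -1 with hσdef
    have hσf : σ * f s₀ x₀ = |f s₀ x₀| := by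
      by_cases h : 0 < f s₀ x₀
      · simp [hσdef, h, abs_of_pos h]
      · have hneg : f s₀ x₀ < 0 := lt_of_le_of_ne (not_lt.mp h) hfne
        simp [hσdef, h, abs_of_neg hneg]
    have hσabs : ∀ z : ℝ, σ * z ≤ |z| := by
      intro z
      have h1 : |σ| = 1 := by
        rw [hσdef]; split_ifs <;> simp
      calc σ * z ≤ |σ * z| := le_abs_self _
        _ = |σ| * |z| := abs_mul _ _
        _ = |z| := by rw [h1, one_mul]
    set e : ℝ := Real.exp (-α * x₀) with hedef
    have hepos : 0 < e := Real.exp_pos _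
    set d1 : ℝ := deriv (fun u => f u x₀) s₀ with hd1def
    set d2 : ℝ := deriv (fun z => f s₀ z) x₀ with hd2def
    have hd1H : HasDerivAt (fun u => f u x₀) d1 s₀ :=
      (hasDerivAt_fst hf s₀ x₀).differentiableAt.hasDerivAt
    have hd2H : HasDerivAt (fun z => f s₀ z) d2 x₀ :=
      (hasDerivAt_snd hf s₀ x₀).differentiableAt.hasDerivAt
    -- time derivative bound: ε ≤ σ * (e * d1)
    have hεd1 : ε ≤ σ * (e * d1) := by
      have hφ : HasDerivAt (fun s => σ * (e * f s x₀)) (σ * (e * d1)) s₀ :=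
        (hd1H.const_mul e).const_mul σ
      refine slope_deriv_ge hspos hφ ?_
      intro s hs0' hss
      have hUb := hnotS s hs0'.le hss x₀ hx₀I
      have h1 : σ * (e * f s x₀) ≤ U (s, x₀) := by
        rw [hUdef]
        calc σ * (e * f s x₀) = e * (σ * f s x₀) := by ring
          _ ≤ e * |f s x₀| := mul_le_mul_of_nonneg_left (hσabs _) hepos.le
      have h3 : σ * (e * f s₀ x₀) = U (s₀, x₀) := by
        rw [hUdef]
        calc σ * (e * f s₀ x₀) = e * (σ * f s₀ x₀) := by ring
          _ = e * |f s₀ x₀| := by rw [hσf]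
      have hring : ε * (1 + s) - ε * (1 + s₀) = ε * (s - s₀) := by ring
      linarith [hU0]
    -- space derivative bound: α * U(s₀,x₀) ≤ σ * (e * d2)
    have hαd2 : α * U (s₀, x₀) ≤ σ * (e * d2) := by
      have hlin : HasDerivAt (fun y : ℝ => -α * y) (-α) x₀ := by
        simpa using (hasDerivAt_id x₀).const_mul (-α)
      have hexp : HasDerivAt (fun y : ℝ => Real.exp (-α * y)) (Real.exp (-α * x₀) * (-α)) x₀ :=
        hlin.exp
      have hψ : HasDerivAt (fun y => σ * (Real.exp (-α * y) * f s₀ y))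
          (σ * ((Real.exp (-α * x₀) * (-α)) * f s₀ x₀ + Real.exp (-α * x₀) * d2)) x₀ :=
        (hexp.mul hd2H).const_mul σ
      have h0 : (0 : ℝ) ≤ σ * ((Real.exp (-α * x₀) * (-α)) * f s₀ x₀ + Real.exp (-α * x₀) * d2) := by
        refine slope_deriv_ge hx₀gt hψ ?_
        intro y hy1 hyx
        have hyI : y ∈ Set.Icc (-1 : ℝ) 1 := ⟨hy1.le, le_trans hyx.le hx₀I.2⟩
        have h1 : σ * (Real.exp (-α * y) * f s₀ y) ≤ U (s₀, y) := by
          rw [hUdef]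
          calc σ * (Real.exp (-α * y) * f s₀ y) = Real.exp (-α * y) * (σ * f s₀ y) := by ring
            _ ≤ Real.exp (-α * y) * |f s₀ y| :=
              mul_le_mul_of_nonneg_left (hσabs _) (Real.exp_pos _).le
        have h2 : σ * (Real.exp (-α * x₀) * f s₀ x₀) = U (s₀, x₀) := by
          rw [hUdef]
          calc σ * (Real.exp (-α * x₀) * f s₀ x₀) = Real.exp (-α * x₀) * (σ * f s₀ x₀) := by ring
            _ = Real.exp (-α * x₀) * |f s₀ x₀| := by rw [hσf]
        have h3 := hmax y hyI
        simp only [zero_mul]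
        linarith
      have hUeq : U (s₀, x₀) = e * |f s₀ x₀| := by rw [hUdef, hedef]
      have hexpand : σ * ((Real.exp (-α * x₀) * (-α)) * f s₀ x₀ + Real.exp (-α * x₀) * d2)
          = -α * (e * (σ * f s₀ x₀)) + σ * (e * d2) := by rw [hedef]; ring
      rw [hexpand, hσf] at h0
      rw [hUeq]
      linarith
    -- final contradiction
    have hlam : lm ≤ lam s₀ x₀ := hlow s₀ (Set.mem_Ici.mpr hs0) x₀ hx₀I
    have hHge : e * |d1 + lam s₀ x₀ * d2| ≤ H :=
      le_ciSup hbH ((⟨s₀, hs0, hst⟩, ⟨x₀, hx₀I⟩) :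
        Set.Icc (0 : ℝ) t × Set.Icc (-1 : ℝ) 1)
    have hσsum : σ * (e * (d1 + lam s₀ x₀ * d2)) ≤ e * |d1 + lam s₀ x₀ * d2| := by
      calc σ * (e * (d1 + lam s₀ x₀ * d2)) = e * (σ * (d1 + lam s₀ x₀ * d2)) := by ring
        _ ≤ e * |d1 + lam s₀ x₀ * d2| := mul_le_mul_of_nonneg_left (hσabs _) hepos.le
    have hexpand2 : σ * (e * (d1 + lam s₀ x₀ * d2))
        = σ * (e * d1) + lam s₀ x₀ * (σ * (e * d2)) := by ring
    have hUnn : 0 ≤ U (s₀, x₀) := hU0pos.le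
    have hed2nn : 0 ≤ σ * (e * d2) := le_trans (by positivity) hαd2
    have h5 : lm * (σ * (e * d2)) ≤ lam s₀ x₀ * (σ * (e * d2)) :=
      mul_le_mul_of_nonneg_right hlam hed2nn
    have h6 : lm * (α * U (s₀, x₀)) ≤ lm * (σ * (e * d2)) :=
      mul_le_mul_of_nonneg_left hαd2 hlm.le
    have h9 : (1 / (α * lm)) * H ≤ U (s₀, x₀) := by
      have hnn : 0 ≤ ε * (1 + s₀) := by positivity
      exact le_trans hHB (le_trans (le_add_of_nonneg_right hnn) hU0)
    have h8 : H ≤ lm * (α * U (s₀, x₀)) := by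
      have hid : lm * (α * ((1 / (α * lm)) * H)) = H := by
        field_simp
      calc H = lm * (α * ((1 / (α * lm)) * H)) := hid.symm
        _ ≤ lm * (α * U (s₀, x₀)) := by
          refine mul_le_mul_of_nonneg_left (mul_le_mul_of_nonneg_left h9 hα.le) hlm.le
    linarith
  -- conclude from key
  by_contra hcfin
  push_neg at hcfin
  have h1t : (0 : ℝ) < 1 + t := by linarith
  set L : ℝ := Real.exp (-α * x) * |f t x| with hLdef
  have hεpos : 0 < (L - B) / (2 * (1 + t)) := by
    apply div_pos
    · linarith
    · linarith
  have hkey := key _ hεpos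
  have : (L - B) / (2 * (1 + t)) * (1 + t) = (L - B) / 2 := by
    field_simp
  rw [this] at hkey
  have h2 : L - B ≤ (L - B) / 2 := sub_le_iff_le_add.mpr (hkey.trans_eq (add_comm _ _))
  exact absurd (h2.trans_lt (half_lt_self (sub_pos.mpr hcfin))) (lt_irrefl _)
end

section
/- Let λ_m > 0 and let λ : [0,∞)×[−1,1] → ℝ be Lipschitz with λ(t,x) ≥ λ_m and with M := sup_{t,x} |∂_t λ(t,x)/λ(t,x)| < ∞. Set α = (2M + 2)/λ_m and w(x) = e^{−αx}. Let f : [0,∞)×[−1,1] → ℝ be C² with bounded first and second derivatives, and set h = ∂_t f + λ ∂_x f, assumed bounded together with ∂_t h. Then there is a constant C (independent of f, λ, h) such that sup_{t≥0, x∈[−1,1]} w(x)|∂_t f(t,x)| ≤ C ( sup_{x} w(x)|∂_t f(0,x)| + sup_{t} w(−1)|∂_t f(t,−1)| + sup_{t,x} w(x)|h(t,x)| + sup_{t,x} w(x)|∂_t h(t,x)| ). -/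
open Set

private lemma no_cross {z : ℝ → ℝ} {a b m : ℝ}
    (hc : ContinuousOn z (Icc a b))
    (hd : ∀ s ∈ Ioo a b, m < z s → ∃ z', HasDerivAt z z' s ∧ z' < 0)
    (h0 : z a ≤ m) : ∀ σ ∈ Icc a b, z σ ≤ m := by
  intro σ hσ
  by_contra hgt
  push_neg at hgt
  have hTclosed : IsClosed {s ∈ Icc a σ | z s ≤ m} := by
    have : {s ∈ Icc a σ | z s ≤ m} = Icc a σ ∩ z ⁻¹' Iic m := rfl
    rw [this]
    exact (hc.mono (Icc_subset_Icc_right hσ.2)).preimage_isClosed_of_isClosed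
      isClosed_Icc isClosed_Iic
  have hTne : {s ∈ Icc a σ | z s ≤ m}.Nonempty := ⟨a, ⟨le_rfl, hσ.1⟩, h0⟩
  have hTbdd : BddAbove {s ∈ Icc a σ | z s ≤ m} := ⟨σ, fun s hs => hs.1.2⟩
  set τ := sSup {s ∈ Icc a σ | z s ≤ m} with hτ
  have hτT : τ ∈ {s ∈ Icc a σ | z s ≤ m} := hTclosed.csSup_mem hTne hTbdd
  have hτσ : τ ≤ σ := hτT.1.2
  have hτa : a ≤ τ := hτT.1.1
  have hτlt : τ < σ := by
    rcases eq_or_lt_of_le hτσ with he | hlt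
    · exfalso; rw [he] at hτT; linarith [hτT.2]
    · exact hlt
  have key : ∀ s ∈ Ioc τ σ, m < z s := by
    intro s hs
    by_contra hle
    push_neg at hle
    have hsT : s ∈ {s ∈ Icc a σ | z s ≤ m} := ⟨⟨hτa.trans hs.1.le, hs.2⟩, hle⟩
    exact absurd (le_csSup hTbdd hsT) (not_le.2 hs.1)
  have hanti : StrictAntiOn z (Icc τ σ) := by
    apply strictAntiOn_of_deriv_neg (convex_Icc τ σ)
      (hc.mono (Icc_subset_Icc hτa hσ.2))
    intro s hs
    rw [interior_Icc] at hs
    obtain ⟨z', hz', hneg⟩ := hd s ⟨lt_of_le_of_lt hτa hs.1, lt_of_lt_of_le hs.2 hσ.2⟩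
      (key s ⟨hs.1, hs.2.le⟩)
    rw [hz'.deriv]; exact hneg
  have := hanti (left_mem_Icc.2 hτlt.le) (right_mem_Icc.2 hτlt.le) hτlt
  linarith [hτT.2]

private lemma arith_decay {c r w B M : ℝ} (hclb : M + 2 ≤ c) (hru : r * w ≤ B * |w|)
    (hBu : B < (M + 2) * |w|) (hune : 0 < |w|) :
    2 * w * (-c * w + r) < 0 := by
  have h1 : w * w = |w| * |w| := (abs_mul_abs_self w).symm
  have h2 : B * |w| < (M + 2) * |w| * |w| := mul_lt_mul_of_pos_right hBu hune
  have h3 : (M + 2) * (|w| * |w|) ≤ c * (w * w) := by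
    rw [← h1]; exact mul_le_mul_of_nonneg_right hclb (mul_self_nonneg w)
  nlinarith [hru, h2, h3, h1]

private lemma arith_sqrt {a b : ℝ} (h1 : a ^ 2 ≤ b ^ 2) (hb : 0 ≤ b) : |a| ≤ b := by
  nlinarith [abs_nonneg a, sq_abs a]

private lemma arith_sqrt_lt {a b : ℝ} (h1 : a ^ 2 < b ^ 2) (ha : 0 ≤ a) : a < |b| := by
  nlinarith [abs_nonneg b, sq_abs b]

private lemma arith_pos {B M x : ℝ} (hB : 0 ≤ B) (hM2 : 0 < M + 2) (hx : B < (M + 2) * x) :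
    0 < x := by nlinarith

private lemma arith_div {S3 S4 M : ℝ} (h3 : 0 ≤ S3) (h4 : 0 ≤ S4) (hM : 0 ≤ M) :
    S4 + M * S3 ≤ (S3 + S4) * (M + 2) := by nlinarith

set_option maxHeartbeats 4000000 in
/-- Weighted `L^∞` estimate for the time derivative of a solution of
the transport inflow problem `∂_t f + λ∂_x f = h` on `I = (−1,1)` with inflow boundary
`{−1}`. With `M` bounding `|∂_tλ/λ|`, `α = (2M+2)/λ_m` and `w(x) = e^{−αx}`, there is a
universal constant `C` (independent of `f, λ, h`) with
`sup w|∂_t f| ≤ C (sup_x w|∂_tf(0,x)| + sup_t w(−1)|∂_tf(t,−1)| + sup w|h| + sup w|∂_th|)`. -/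
theorem stmt6 :
    ∃ C : ℝ, 0 < C ∧
      ∀ (lm M : ℝ) (lam f h : ℝ → ℝ → ℝ) (K : NNReal),
        0 < lm → 0 ≤ M →
        LipschitzOnWith K (fun p : ℝ × ℝ => lam p.1 p.2)
          (Set.Ici (0 : ℝ) ×ˢ Set.Icc (-1 : ℝ) 1) →
        (∀ t ∈ Set.Ici (0 : ℝ), ∀ x ∈ Set.Icc (-1 : ℝ) 1, lm ≤ lam t x) →
        (∀ t ∈ Set.Ici (0 : ℝ), ∀ x ∈ Set.Icc (-1 : ℝ) 1,
          DifferentiableAt ℝ (fun s => lam s x) t ∧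
          |deriv (fun s => lam s x) t| ≤ M * lam t x) →
        ContDiff ℝ 2 (fun p : ℝ × ℝ => f p.1 p.2) →
        (∃ Mf : ℝ, ∀ t ∈ Set.Ici (0 : ℝ), ∀ x ∈ Set.Icc (-1 : ℝ) 1,
          ‖fderiv ℝ (fun p : ℝ × ℝ => f p.1 p.2) (t, x)‖ ≤ Mf ∧
          ‖fderiv ℝ (fderiv ℝ (fun p : ℝ × ℝ => f p.1 p.2)) (t, x)‖ ≤ Mf) →
        (∀ t x : ℝ, h t x = deriv (fun s => f s x) t + lam t x * deriv (fun y => f t y) x) →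
        (∃ Mh : ℝ, ∀ t ∈ Set.Ici (0 : ℝ), ∀ x ∈ Set.Icc (-1 : ℝ) 1,
          |h t x| ≤ Mh ∧ |deriv (fun s => h s x) t| ≤ Mh) →
        ∀ t ∈ Set.Ici (0 : ℝ), ∀ x ∈ Set.Icc (-1 : ℝ) 1,
          Real.exp (-((2 * M + 2) / lm) * x) * |deriv (fun s => f s x) t| ≤
            C * ((⨆ y : Set.Icc (-1 : ℝ) 1,
                    Real.exp (-((2 * M + 2) / lm) * (y : ℝ)) * |deriv (fun s => f s (y : ℝ)) 0|)
              + (⨆ s : Set.Ici (0 : ℝ),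
                    Real.exp (-((2 * M + 2) / lm) * (-1 : ℝ)) * |deriv (fun τ => f τ (-1)) (s : ℝ)|)
              + (⨆ q : Set.Ici (0 : ℝ) × Set.Icc (-1 : ℝ) 1,
                    Real.exp (-((2 * M + 2) / lm) * (q.2 : ℝ)) * |h (q.1 : ℝ) (q.2 : ℝ)|)
              + (⨆ q : Set.Ici (0 : ℝ) × Set.Icc (-1 : ℝ) 1,
                    Real.exp (-((2 * M + 2) / lm) * (q.2 : ℝ)) *
                      |deriv (fun s => h s (q.2 : ℝ)) (q.1 : ℝ)|)) := by
  refine ⟨1, one_pos, ?_⟩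
  intro lm M lam f h K hlm hM hKlip hlb hlamt hf2 hMfE hht hMhE t ht x hx
  obtain ⟨Mf, hMf⟩ := hMfE
  obtain ⟨Mh, hMh⟩ := hMhE
  have ht0 : (0:ℝ) ≤ t := ht
  set α : ℝ := (2 * M + 2) / lm with hαdef
  have hα0 : 0 < α := by positivity
  set F : ℝ × ℝ → ℝ := fun p => f p.1 p.2 with hFdef
  have hFd : Differentiable ℝ F := hf2.differentiable (by norm_num)
  set Φ : ℝ × ℝ → (ℝ × ℝ →L[ℝ] ℝ) := fderiv ℝ F with hΦdef
  have hΦc : ContDiff ℝ 1 Φ := hf2.fderiv_right (by norm_num)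
  have hΦd : Differentiable ℝ Φ := hΦc.differentiable one_ne_zero
  set G : ℝ × ℝ → ℝ := fun p => Φ p (1, 0) with hGdef
  set G₂ : ℝ × ℝ → ℝ := fun p => Φ p (0, 1) with hG₂def
  have hGc : ContDiff ℝ 1 G :=
    (ContinuousLinearMap.apply ℝ ℝ ((1:ℝ), (0:ℝ))).contDiff.comp hΦc
  have hG₂c : ContDiff ℝ 1 G₂ :=
    (ContinuousLinearMap.apply ℝ ℝ ((0:ℝ), (1:ℝ))).contDiff.comp hΦc
  have hGd : Differentiable ℝ G := hGc.differentiable one_ne_zero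
  have hG₂d : Differentiable ℝ G₂ := hG₂c.differentiable one_ne_zero
  -- partial derivatives of f
  have hder_t : ∀ σ y : ℝ, HasDerivAt (fun s => f s y) (G (σ, y)) σ := by
    intro σ y
    have h1 : HasDerivAt (fun s : ℝ => (s, y)) ((1:ℝ), (0:ℝ)) σ :=
      (hasDerivAt_id σ).prodMk (hasDerivAt_const σ y)
    exact ((hFd (σ, y)).hasFDerivAt.comp_hasDerivAt σ h1 : _)
  have hder_x : ∀ σ y : ℝ, HasDerivAt (fun y' => f σ y') (G₂ (σ, y)) y := by
    intro σ y
    have h1 : HasDerivAt (fun y' : ℝ => (σ, y')) ((0:ℝ), (1:ℝ)) y :=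
      (hasDerivAt_const y σ).prodMk (hasDerivAt_id y)
    exact ((hFd (σ, y)).hasFDerivAt.comp_hasDerivAt y h1 : _)
  have hderiv_t : ∀ σ y : ℝ, deriv (fun s => f s y) σ = G (σ, y) :=
    fun σ y => (hder_t σ y).deriv
  have hh' : ∀ σ y : ℝ, h σ y = G (σ, y) + lam σ y * G₂ (σ, y) := by
    intro σ y
    rw [hht σ y, hderiv_t σ y, (hder_x σ y).deriv]
  -- Clairaut
  have hsymm : ∀ p : ℝ × ℝ, fderiv ℝ G₂ p ((1:ℝ), (0:ℝ)) = fderiv ℝ G p ((0:ℝ), (1:ℝ)) := by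
    intro p
    have hΦp : HasFDerivAt Φ (fderiv ℝ Φ p) p := (hΦd p).hasFDerivAt
    have e2 : fderiv ℝ G₂ p =
        (ContinuousLinearMap.apply ℝ ℝ ((0:ℝ), (1:ℝ))).comp (fderiv ℝ Φ p) :=
      (((ContinuousLinearMap.apply ℝ ℝ ((0:ℝ), (1:ℝ))).hasFDerivAt.comp p hΦp : _)).fderiv
    have e1 : fderiv ℝ G p =
        (ContinuousLinearMap.apply ℝ ℝ ((1:ℝ), (0:ℝ))).comp (fderiv ℝ Φ p) :=
      (((ContinuousLinearMap.apply ℝ ℝ ((1:ℝ), (0:ℝ))).hasFDerivAt.comp p hΦp : _)).fderiv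
    rw [e1, e2]
    exact second_derivative_symmetric (fun q => (hFd q).hasFDerivAt) hΦp _ _
  -- time derivative of h
  have hhd : ∀ σ ∈ Ici (0:ℝ), ∀ y ∈ Icc (-1:ℝ) 1,
      HasDerivAt (fun s => h s y)
        (fderiv ℝ G (σ, y) ((1:ℝ), (0:ℝ)) + deriv (fun s => lam s y) σ * G₂ (σ, y)
          + lam σ y * fderiv ℝ G (σ, y) ((0:ℝ), (1:ℝ))) σ := by
    intro σ hσ y hy
    have hcurve : HasDerivAt (fun s : ℝ => (s, y)) ((1:ℝ), (0:ℝ)) σ :=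
      (hasDerivAt_id σ).prodMk (hasDerivAt_const σ y)
    have hGt : HasDerivAt (fun s => G (s, y)) (fderiv ℝ G (σ, y) ((1:ℝ), (0:ℝ))) σ :=
      (HasFDerivAt.comp_hasDerivAt (l := G) σ (hGd (σ, y)).hasFDerivAt hcurve : _)
    have hG₂t : HasDerivAt (fun s => G₂ (s, y)) (fderiv ℝ G₂ (σ, y) ((1:ℝ), (0:ℝ))) σ :=
      (HasFDerivAt.comp_hasDerivAt (l := G₂) σ (hG₂d (σ, y)).hasFDerivAt hcurve : _)
    have hlamd : HasDerivAt (fun s => lam s y) (deriv (fun s => lam s y) σ) σ :=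
      ((hlamt σ hσ y hy).1).hasDerivAt
    have hsum : HasDerivAt (fun s => G (s, y) + lam s y * G₂ (s, y))
        (fderiv ℝ G (σ, y) ((1:ℝ), (0:ℝ)) +
          (deriv (fun s => lam s y) σ * G₂ (σ, y) +
            lam σ y * fderiv ℝ G₂ (σ, y) ((1:ℝ), (0:ℝ)))) σ :=
      hGt.add (hlamd.mul hG₂t)
    have hfun : (fun s => h s y) = fun s => G (s, y) + lam s y * G₂ (s, y) :=
      funext fun s => hh' s y
    rw [hfun]
    rw [hsymm (σ, y)] at hsum
    convert hsum using 1
    ring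
  -- rewrite the goal in terms of G
  simp only [hderiv_t]
  -- name the four suprema
  set S1 : ℝ := ⨆ y : Set.Icc (-1:ℝ) 1, Real.exp (-α * (y:ℝ)) * |G (0, (y:ℝ))| with hS1def
  set S2 : ℝ := ⨆ s : Set.Ici (0:ℝ), Real.exp (-α * (-1:ℝ)) * |G ((s:ℝ), -1)| with hS2def
  set S3 : ℝ := ⨆ q : Set.Ici (0:ℝ) × Set.Icc (-1:ℝ) 1,
      Real.exp (-α * (q.2:ℝ)) * |h (q.1:ℝ) (q.2:ℝ)| with hS3def
  set S4 : ℝ := ⨆ q : Set.Ici (0:ℝ) × Set.Icc (-1:ℝ) 1,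
      Real.exp (-α * (q.2:ℝ)) * |deriv (fun s => h s (q.2:ℝ)) (q.1:ℝ)| with hS4def
  rw [one_mul]
  -- basic bounds
  have hMf0 : 0 ≤ Mf := le_trans (norm_nonneg _) (hMf 0 (self_mem_Ici) 0 (by norm_num)).1
  have hMh0 : 0 ≤ Mh := le_trans (abs_nonneg _) (hMh 0 (self_mem_Ici) 0 (by norm_num)).1
  have hGbd : ∀ σ ∈ Ici (0:ℝ), ∀ y ∈ Icc (-1:ℝ) 1, |G (σ, y)| ≤ Mf := by
    intro σ hσ y hy
    have h1 : ‖G (σ, y)‖ ≤ ‖Φ (σ, y)‖ * ‖((1:ℝ), (0:ℝ))‖ := (Φ (σ, y)).le_opNorm _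
    have h2 : ‖((1:ℝ), (0:ℝ))‖ = 1 := by
      rw [Prod.norm_def]; norm_num
    rw [h2, mul_one, Real.norm_eq_abs] at h1
    exact h1.trans (hMf σ hσ y hy).1
  have hexp_le : ∀ y ∈ Icc (-1:ℝ) 1, Real.exp (-α * y) ≤ Real.exp α := by
    intro y hy
    exact Real.exp_le_exp.2 (by nlinarith [hy.1, hα0.le])
  have hneg1mem : (-1:ℝ) ∈ Icc (-1:ℝ) 1 := by norm_num
  have h0mem : (0:ℝ) ∈ Icc (-1:ℝ) 1 := by norm_num
  have hbdd1 : BddAbove (range fun y : Set.Icc (-1:ℝ) 1 =>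
      Real.exp (-α * (y:ℝ)) * |G (0, (y:ℝ))|) := by
    refine ⟨Real.exp α * Mf, ?_⟩
    rintro _ ⟨y, rfl⟩
    exact mul_le_mul (hexp_le y y.2) (hGbd 0 (self_mem_Ici) y y.2) (abs_nonneg _) (Real.exp_pos α).le
  have hbdd2 : BddAbove (range fun s : Set.Ici (0:ℝ) =>
      Real.exp (-α * (-1:ℝ)) * |G ((s:ℝ), -1)|) := by
    refine ⟨Real.exp α * Mf, ?_⟩
    rintro _ ⟨s, rfl⟩
    exact mul_le_mul (hexp_le (-1) hneg1mem) (hGbd s s.2 (-1) hneg1mem)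
      (abs_nonneg _) (Real.exp_pos α).le
  have hbdd3 : BddAbove (range fun q : Set.Ici (0:ℝ) × Set.Icc (-1:ℝ) 1 =>
      Real.exp (-α * (q.2:ℝ)) * |h (q.1:ℝ) (q.2:ℝ)|) := by
    refine ⟨Real.exp α * Mh, ?_⟩
    rintro _ ⟨q, rfl⟩
    exact mul_le_mul (hexp_le q.2 q.2.2) (hMh q.1 q.1.2 q.2 q.2.2).1
      (abs_nonneg _) (Real.exp_pos α).le
  have hbdd4 : BddAbove (range fun q : Set.Ici (0:ℝ) × Set.Icc (-1:ℝ) 1 =>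
      Real.exp (-α * (q.2:ℝ)) * |deriv (fun s => h s (q.2:ℝ)) (q.1:ℝ)|) := by
    refine ⟨Real.exp α * Mh, ?_⟩
    rintro _ ⟨q, rfl⟩
    exact mul_le_mul (hexp_le q.2 q.2.2) (hMh q.1 q.1.2 q.2 q.2.2).2
      (abs_nonneg _) (Real.exp_pos α).le
  have hS1ub : ∀ y ∈ Icc (-1:ℝ) 1, Real.exp (-α * y) * |G (0, y)| ≤ S1 :=
    fun y hy => le_ciSup hbdd1 (⟨y, hy⟩ : Set.Icc (-1:ℝ) 1)
  have hS2ub : ∀ s ∈ Ici (0:ℝ), Real.exp (-α * (-1:ℝ)) * |G (s, -1)| ≤ S2 :=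
    fun s hs => le_ciSup hbdd2 (⟨s, hs⟩ : Set.Ici (0:ℝ))
  have hS3ub : ∀ s ∈ Ici (0:ℝ), ∀ y ∈ Icc (-1:ℝ) 1,
      Real.exp (-α * y) * |h s y| ≤ S3 :=
    fun s hs y hy => le_ciSup hbdd3 ((⟨s, hs⟩, ⟨y, hy⟩) : Set.Ici (0:ℝ) × Set.Icc (-1:ℝ) 1)
  have hS4ub : ∀ s ∈ Ici (0:ℝ), ∀ y ∈ Icc (-1:ℝ) 1,
      Real.exp (-α * y) * |deriv (fun τ => h τ y) s| ≤ S4 :=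
    fun s hs y hy => le_ciSup hbdd4 ((⟨s, hs⟩, ⟨y, hy⟩) : Set.Ici (0:ℝ) × Set.Icc (-1:ℝ) 1)
  have hS1nn : 0 ≤ S1 := le_trans (by positivity) (hS1ub 0 h0mem)
  have hS2nn : 0 ≤ S2 := le_trans (by positivity) (hS2ub 0 (self_mem_Ici))
  have hS3nn : 0 ≤ S3 := le_trans (by positivity) (hS3ub 0 (self_mem_Ici) 0 h0mem)
  have hS4nn : 0 ≤ S4 := le_trans (by positivity) (hS4ub 0 (self_mem_Ici) 0 h0mem)
  -- extended vector field and characteristic ODE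
  set cl : ℝ → ℝ := fun y => min (max y (-1)) 1 with hcldef
  set v : ℝ → ℝ → ℝ := fun s y => lam (max s 0) (cl y) with hvdef
  have hclmem : ∀ y : ℝ, cl y ∈ Icc (-1:ℝ) 1 :=
    fun y => ⟨le_min (le_max_right y (-1)) (by norm_num), min_le_right _ 1⟩
  have hcl_id : ∀ y ∈ Icc (-1:ℝ) 1, cl y = y := by
    intro y hy
    simp only [hcldef]
    rw [max_eq_left hy.1, min_eq_left hy.2]
  have hveq : ∀ s ∈ Ici (0:ℝ), ∀ y ∈ Icc (-1:ℝ) 1, v s y = lam s y := by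
    intro s hs y hy
    simp only [hvdef]
    rw [max_eq_left hs, hcl_id y hy]
  have hvlb : ∀ s y : ℝ, lm ≤ v s y :=
    fun s y => hlb _ (le_max_right s 0) _ (hclmem y)
  have hproj : LipschitzWith 1 (fun p : ℝ × ℝ => (max p.1 0, cl p.2)) := by
    have h1 : LipschitzWith 1 (fun p : ℝ × ℝ => max p.1 0) :=
      LipschitzWith.max_const (LipschitzWith.prod_fst) 0
    have h2 : LipschitzWith 1 (fun p : ℝ × ℝ => cl p.2) :=
      ((LipschitzWith.prod_snd).max_const (-1)).min_const 1
    have := h1.prodMk h2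
    rwa [max_self] at this
  have hmaps : MapsTo (fun p : ℝ × ℝ => (max p.1 0, cl p.2)) univ
      (Set.Ici (0 : ℝ) ×ˢ Set.Icc (-1 : ℝ) 1) :=
    fun p _ => ⟨le_max_right p.1 0, hclmem p.2⟩
  have hvPlip : LipschitzWith K (fun p : ℝ × ℝ => v p.1 p.2) := by
    have := hKlip.comp (hproj.lipschitzOnWith (s := univ)) (hmaps)
    rw [mul_one] at this
    exact (lipschitzOnWith_univ).mp this
  set Cb : ℝ := |lam 0 0| + K * (t + 1) + 1 with hCbdef
  have hCb0 : 0 < Cb := by positivity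
  have hvbd : ∀ s ∈ Icc (0:ℝ) t, ∀ y : ℝ, ‖v s y‖ ≤ Cb := by
    intro s hs y
    have hmem1 : ((max s 0, cl y) : ℝ × ℝ) ∈ Set.Ici (0 : ℝ) ×ˢ Set.Icc (-1 : ℝ) 1 :=
      ⟨le_max_right s 0, hclmem y⟩
    have hmem0 : ((0,0) : ℝ × ℝ) ∈ Set.Ici (0 : ℝ) ×ˢ Set.Icc (-1 : ℝ) 1 :=
      ⟨show (0:ℝ) ≤ 0 from le_rfl, by norm_num⟩
    have hdist := hKlip.dist_le_mul _ hmem1 _ hmem0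
    have hd2 : dist ((max s 0, cl y) : ℝ × ℝ) ((0,0) : ℝ × ℝ) ≤ t + 1 := by
      rw [Prod.dist_eq]
      have e1 : dist (max s 0) 0 ≤ t + 1 := by
        rw [Real.dist_eq, sub_zero, abs_of_nonneg (le_max_right s 0)]
        have : max s 0 ≤ t := max_le hs.2 ht0
        linarith
      have e2 : dist (cl y) 0 ≤ t + 1 := by
        rw [Real.dist_eq, sub_zero]
        have := hclmem y
        rw [abs_le]
        constructor <;> [linarith [this.1]; linarith [this.2]]
      exact max_le e1 e2
    rw [Real.dist_eq] at hdist
    rw [Real.norm_eq_abs]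
    calc |v s y| ≤ |lam 0 0| + |v s y - lam 0 0| := by
          have := abs_add_le (lam 0 0) (v s y - lam 0 0)
          simpa using this.trans_eq' (by ring_nf)
      _ ≤ Cb := by rw [hCbdef]; nlinarith [K.coe_nonneg]
  have hpl : IsPicardLindelof (fun s y => v s y) (tmin := 0) (tmax := t) ⟨t, ⟨ht0, le_rfl⟩⟩ x
      ⟨Cb * t, mul_nonneg hCb0.le ht0⟩ 0 ⟨Cb, hCb0.le⟩ K :=
    { lipschitzOnWith := fun s _ => by
        have := hvPlip.comp (LipschitzWith.prodMk_left s)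
        rw [mul_one] at this
        exact this.lipschitzOnWith
      continuousOn := fun y _ =>
        (hvPlip.continuous.comp (continuous_id.prodMk continuous_const)).continuousOn
      norm_le := fun s hs y _ => hvbd s hs y
      mul_max_le := by
        show Cb * max (t - t) (t - 0) ≤ Cb * t - ((0:NNReal):ℝ)
        rw [NNReal.coe_zero, sub_self, sub_zero, sub_zero, max_eq_right ht0] }
  obtain ⟨X, hXt, hXd⟩ := hpl.exists_eq_forall_mem_Icc_hasDerivWithinAt₀
  replace hXt : X t = x := hXt
  have hXcont : ContinuousOn X (Icc 0 t) := fun s hs => (hXd s hs).continuousWithinAt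
  have hXmono : StrictMonoOn X (Icc 0 t) := by
    apply strictMonoOn_of_deriv_pos (convex_Icc 0 t) hXcont
    intro s hs
    rw [interior_Icc] at hs
    have hD : HasDerivAt X (v s (X s)) s :=
      (hXd s (Ioo_subset_Icc_self hs)).hasDerivAt (Icc_mem_nhds hs.1 hs.2)
    rw [hD.deriv]
    exact lt_of_lt_of_le hlm (hvlb s (X s))
  obtain ⟨s0, hs0mem, hXs0lb, hcase⟩ :
      ∃ s0, s0 ∈ Icc 0 t ∧ (-1:ℝ) ≤ X s0 ∧ (s0 = 0 ∨ X s0 = -1) := by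
    by_cases hc : (-1:ℝ) ≤ X 0
    · exact ⟨0, ⟨le_rfl, ht0⟩, hc, Or.inl rfl⟩
    · push_neg at hc
      have hIVT := intermediate_value_Icc ht0 hXcont
      have hmem : (-1:ℝ) ∈ Icc (X 0) (X t) := ⟨hc.le, by rw [hXt]; exact hx.1⟩
      obtain ⟨s0, hs0mem, hs0⟩ := hIVT hmem
      exact ⟨s0, hs0mem, hs0.ge, Or.inr hs0⟩
  have hXrange : ∀ s ∈ Icc s0 t, X s ∈ Icc (-1:ℝ) 1 := by
    intro s hs
    have hsmem : s ∈ Icc 0 t := ⟨hs0mem.1.trans hs.1, hs.2⟩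
    constructor
    · exact hXs0lb.trans (hXmono.monotoneOn hs0mem hsmem hs.1)
    · have hle : X s ≤ X t := hXmono.monotoneOn hsmem ⟨ht0, le_rfl⟩ hs.2
      rw [hXt] at hle
      exact hle.trans hx.2
  -- weighted quantity along the characteristic
  set u : ℝ → ℝ := fun s => Real.exp (-α * X s) * G (s, X s) with hudef
  have hus0 : |u s0| ≤ S1 + S2 := by
    have hXs0mem : X s0 ∈ Icc (-1:ℝ) 1 := hXrange s0 ⟨le_rfl, hs0mem.2⟩
    have habs : |u s0| = Real.exp (-α * X s0) * |G (s0, X s0)| := by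
      rw [hudef, abs_mul, abs_of_pos (Real.exp_pos _)]
    rcases hcase with h0' | hb
    · rw [h0'] at habs hXs0mem
      rw [h0']
      have := hS1ub (X 0) hXs0mem
      rw [habs]
      linarith [hS2nn]
    · rw [hb] at habs
      have := hS2ub s0 hs0mem.1
      rw [habs]
      linarith [hS1nn]
  set B : ℝ := S4 + M * S3 with hBdef
  have hB0 : 0 ≤ B := add_nonneg hS4nn (mul_nonneg hM hS3nn)
  have hM2 : (0:ℝ) < M + 2 := by linarith
  set m : ℝ := max ((u s0)^2) ((B/(M+2))^2) with hmdef
  have hz : ∀ s ∈ Ioo s0 t, m < (u s)^2 →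
      ∃ z', HasDerivAt (fun s' => (u s')^2) z' s ∧ z' < 0 := by
    intro s hs hgt
    have hs0le : (0:ℝ) ≤ s0 := hs0mem.1
    have hsIcc : s ∈ Icc 0 t := ⟨hs0le.trans hs.1.le, hs.2.le⟩
    have hsIci : s ∈ Ici (0:ℝ) := hs0le.trans hs.1.le
    have hXs : X s ∈ Icc (-1:ℝ) 1 := hXrange s ⟨hs.1.le, hs.2.le⟩
    have hXds : HasDerivAt X (lam s (X s)) s := by
      have hd := (hXd s hsIcc).hasDerivAt (Icc_mem_nhds (lt_of_le_of_lt hs0le hs.1) hs.2)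
      rwa [hveq s hsIci (X s) hXs] at hd
    have hlampos : 0 < lam s (X s) := lt_of_lt_of_le hlm (hlb s hsIci (X s) hXs)
    have hlamlb : 2*M + 2 ≤ α * lam s (X s) := by
      have h1 : α * lm ≤ α * lam s (X s) :=
        mul_le_mul_of_nonneg_left (hlb s hsIci (X s) hXs) hα0.le
      have h2 : α * lm = 2*M + 2 := by rw [hαdef]; field_simp
      linarith
    set lt' : ℝ := deriv (fun τ => lam τ (X s)) s with hltdef
    have hq : |lt'| ≤ M * lam s (X s) := (hlamt s hsIci (X s) hXs).2
    have hqabs : |lt' / lam s (X s)| ≤ M := by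
      rw [abs_div, abs_of_pos hlampos]
      exact (div_le_iff₀ hlampos).2 hq
    have hcurve : HasDerivAt (fun s' => (s', X s')) ((1:ℝ), lam s (X s)) s :=
      (hasDerivAt_id s).prodMk hXds
    have hGcomp : HasDerivAt (fun s' => G (s', X s'))
        (fderiv ℝ G (s, X s) ((1:ℝ), lam s (X s))) s :=
      (HasFDerivAt.comp_hasDerivAt (l := G) s (hGd (s, X s)).hasFDerivAt hcurve : _)
    have hsplit : fderiv ℝ G (s, X s) ((1:ℝ), lam s (X s)) =
        fderiv ℝ G (s, X s) ((1:ℝ),(0:ℝ)) +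
          lam s (X s) * fderiv ℝ G (s, X s) ((0:ℝ),(1:ℝ)) := by
      have hvec : ((1:ℝ), lam s (X s)) = ((1:ℝ),(0:ℝ)) + lam s (X s) • ((0:ℝ),(1:ℝ)) := by
        simp [Prod.ext_iff]
      rw [hvec, map_add, map_smul, smul_eq_mul]
    have hexpd : HasDerivAt (fun s' => Real.exp (-α * X s'))
        (Real.exp (-α * X s) * (-α * lam s (X s))) s :=
      (hXds.const_mul (-α)).exp
    have hud : HasDerivAt u
        (Real.exp (-α * X s) * (-α * lam s (X s)) * G (s, X s) +
          Real.exp (-α * X s) * fderiv ℝ G (s, X s) ((1:ℝ), lam s (X s))) s :=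
      hexpd.mul hGcomp
    have hpde := (hhd s hsIci (X s) hXs).deriv
    have hufin : HasDerivAt u
        (-(α * lam s (X s) - lt' / lam s (X s)) * u s +
          Real.exp (-α * X s) * (deriv (fun τ => h τ (X s)) s -
            (lt' / lam s (X s)) * h s (X s))) s := by
      convert hud using 1
      rw [hsplit, hpde, hh' s (X s)]
      have hu_s : u s = Real.exp (-α * X s) * G (s, X s) := rfl
      rw [hu_s]
      field_simp
      ring
    refine ⟨2 * u s * (-(α * lam s (X s) - lt' / lam s (X s)) * u s +
      Real.exp (-α * X s) * (deriv (fun τ => h τ (X s)) s -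
        (lt' / lam s (X s)) * h s (X s))), ?_, ?_⟩
    · have hpow := hufin.pow 2
      exact hpow.congr_deriv (by push_cast; ring)
    · set c : ℝ := α * lam s (X s) - lt' / lam s (X s) with hcdef
      set r : ℝ := Real.exp (-α * X s) * (deriv (fun τ => h τ (X s)) s -
        (lt' / lam s (X s)) * h s (X s)) with hrdef
      have he0 : (0:ℝ) < Real.exp (-α * X s) := Real.exp_pos _
      have h4 : Real.exp (-α * X s) * |deriv (fun τ => h τ (X s)) s| ≤ S4 :=
        hS4ub s hsIci (X s) hXs
      have h3 : Real.exp (-α * X s) * |h s (X s)| ≤ S3 := hS3ub s hsIci (X s) hXs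
      have hrabs : |r| ≤ B := by
        rw [hrdef, hBdef]
        calc |Real.exp (-α * X s) * (deriv (fun τ => h τ (X s)) s -
              (lt' / lam s (X s)) * h s (X s))|
            = Real.exp (-α * X s) * |deriv (fun τ => h τ (X s)) s -
              (lt' / lam s (X s)) * h s (X s)| := by
              rw [abs_mul, abs_of_pos he0]
          _ ≤ Real.exp (-α * X s) * (|deriv (fun τ => h τ (X s)) s| +
              |lt' / lam s (X s)| * |h s (X s)|) := by
              refine mul_le_mul_of_nonneg_left ?_ he0.le
              calc |deriv (fun τ => h τ (X s)) s - (lt' / lam s (X s)) * h s (X s)|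
                  ≤ |deriv (fun τ => h τ (X s)) s| + |(lt' / lam s (X s)) * h s (X s)| :=
                    abs_sub _ _
                _ = _ := by rw [abs_mul]
          _ = Real.exp (-α * X s) * |deriv (fun τ => h τ (X s)) s| +
              |lt' / lam s (X s)| * (Real.exp (-α * X s) * |h s (X s)|) := by ring
          _ ≤ S4 + M * S3 := by
              have hmm : |lt' / lam s (X s)| * (Real.exp (-α * X s) * |h s (X s)|) ≤ M * S3 :=
                mul_le_mul hqabs h3 (mul_nonneg he0.le (abs_nonneg _)) hM
              linarith [h4, hmm]
      have hclb : M + 2 ≤ c := by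
        have := (abs_le.1 hqabs).2
        rw [hcdef]
        linarith
      have hBu : B < (M+2) * |u s| := by
        have h1 : (B/(M+2))^2 < (u s)^2 := lt_of_le_of_lt (le_max_right _ _) hgt
        have h2 : B/(M+2) < |u s| := arith_sqrt_lt h1 (div_nonneg hB0 hM2.le)
        linarith [(div_lt_iff₀ hM2).1 h2]
      have hune : (0:ℝ) < |u s| := arith_pos hB0 hM2 hBu
      have hru : r * u s ≤ B * |u s| := by
        calc r * u s ≤ |r * u s| := le_abs_self _
          _ = |r| * |u s| := abs_mul _ _
          _ ≤ B * |u s| := mul_le_mul_of_nonneg_right hrabs (abs_nonneg _)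
      exact arith_decay hclb hru hBu hune
  have hucont : ContinuousOn u (Icc s0 t) := by
    have hX' : ContinuousOn X (Icc s0 t) := hXcont.mono (Icc_subset_Icc hs0mem.1 le_rfl)
    have h1 : ContinuousOn (fun s => Real.exp (-α * X s)) (Icc s0 t) :=
      Real.continuous_exp.comp_continuousOn (continuousOn_const.mul hX')
    have h2 : ContinuousOn (fun s => G (s, X s)) (Icc s0 t) :=
      hGc.continuous.comp_continuousOn (continuousOn_id.prodMk hX')
    exact h1.mul h2
  have hzt : u t ^ 2 ≤ m :=
    no_cross (hucont.pow 2) hz (le_max_left _ _) t ⟨hs0mem.2, le_rfl⟩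
  have hBdiv : B/(M+2) ≤ S3 + S4 := by
    rw [div_le_iff₀ hM2, hBdef]
    exact arith_div hS3nn hS4nn hM
  have hBdivnn : 0 ≤ B/(M+2) := div_nonneg hB0 hM2.le
  have hmax2 : m ≤ (max (|u s0|) (B/(M+2)))^2 := by
    apply max_le
    · rw [← sq_abs]
      exact pow_le_pow_left₀ (abs_nonneg _) (le_max_left _ _) 2
    · exact pow_le_pow_left₀ hBdivnn (le_max_right _ _) 2
  have hut : |u t| ≤ max (|u s0|) (B/(M+2)) := by
    have hmax0 : 0 ≤ max (|u s0|) (B/(M+2)) := le_max_of_le_left (abs_nonneg _)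
    exact arith_sqrt (hzt.trans hmax2) hmax0
  have hfin : |u t| ≤ S1 + S2 + S3 + S4 := by
    refine hut.trans (max_le ?_ ?_)
    · linarith [hus0, hS3nn, hS4nn]
    · linarith [hBdiv, hS1nn, hS2nn]
  have hueq : u t = Real.exp (-α * x) * G (t, x) := by
    have h5 : u t = Real.exp (-α * X t) * G (t, X t) := rfl
    rw [h5, hXt]
  have hgoal : Real.exp (-α * x) * |G (t, x)| = |u t| := by
    rw [hueq, abs_mul, abs_of_pos (Real.exp_pos _)]
  rw [hgoal]
  exact hfin
end

section
/- Let Ω̄ = [−1,1] × D̄ with D = B(0,1) the unit disk, lateral boundary γ₀ = [−1,1] × ∂D. Let u : [0,∞)×Ω̄ → ℝ³ be Lipschitz with u₁ ≥ c₁ > 0 and u·ν = 0 on γ₀ (i.e. u(τ,y)·(0,y₂,y₃) = 0 when y₂²+y₃² = 1). Let f : [0,∞)×Ω̄ → ℝ be a C¹ solution of ∂_t f + u·∇f = h on [0,∞)×Ω̄. If f(0,x) = 0 for all x ∈ γ₀, f(t,x) = 0 for all t ≥ 0 and all x in the inflow lateral edge {x₁ = −1} ∩ γ₀, and h(t,x)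 = 0 for all t ≥ 0 and x ∈ γ₀, then f(t,x) = 0 for all t ≥ 0 and x ∈ γ₀. -/
open Set

/-- Partial derivative in the `i`-th coordinate direction of a scalar function on `ℝ³`. -/
noncomputable def pd (i : Fin 3) (g : (Fin 3 → ℝ) → ℝ) (x : Fin 3 → ℝ) : ℝ :=
  deriv (fun s => g (Function.update x i s)) (x i)

/-- The closed finite circular pipe `Ω̄ = [−1,1] × D̄`, `D = B(0,1) ⊂ ℝ²`. -/
def circPipe : Set (Fin 3 → ℝ) :=
  {y | y 0 ∈ Set.Icc (-1 : ℝ) 1 ∧ (y 1) ^ 2 + (y 2) ^ 2 ≤ 1}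

/-- One-sided maximality from the left forces the derivative to be nonnegative. -/
lemma deriv_nonneg_of_left_max {φ : ℝ → ℝ} {a t d : ℝ} (hat : a < t)
    (hd : HasDerivAt φ d t) (hmax : ∀ s ∈ Set.Icc a t, φ s ≤ φ t) : 0 ≤ d := by
  have h1 : Filter.Tendsto (slope φ t) (nhdsWithin t (Set.Iio t)) (nhds d) :=
    (hasDerivAt_iff_tendsto_slope.mp hd).mono_left
      (nhdsWithin_mono _ (fun s hs => ne_of_lt hs))
  refine ge_of_tendsto h1 ?_
  filter_upwards [Ioo_mem_nhdsLT hat] with s hs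
  have h2 : φ s ≤ φ t := hmax s ⟨le_of_lt hs.1, le_of_lt hs.2⟩
  have hlt : s - t < 0 := sub_neg.mpr hs.2
  have : slope φ t s = (φ t - φ s) / (t - s) := by
    rw [slope_def_field, ← neg_sub (φ t) (φ s), ← neg_sub t s, neg_div_neg_eq]
  rw [this]
  exact div_nonneg (sub_nonneg.mpr h2) (by linarith)

/-- In the circular pipe, let `u` be Lipschitz with `u₁ ≥ c₁ > 0` and
`u·ν = 0` on the lateral boundary `γ₀`, and let `f` be a `C¹` solution of
`∂_t f + u·∇f = h`. If `f(0,·) = 0` on `γ₀`, `f = 0` on the inflow lateral edge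
`{x₁ = −1} ∩ γ₀` for all times, and `h = 0` on `γ₀` for all times, then `f = 0`
on `γ₀` for all times. -/
theorem stmt12 (c₁ : ℝ) (hc₁ : 0 < c₁) (u : ℝ → (Fin 3 → ℝ) → Fin 3 → ℝ) (K : NNReal)
    (hulip : LipschitzOnWith K (fun p : ℝ × (Fin 3 → ℝ) => u p.1 p.2)
      (Set.Ici (0 : ℝ) ×ˢ circPipe))
    (hu1 : ∀ t ∈ Set.Ici (0 : ℝ), ∀ y ∈ circPipe, c₁ ≤ u t y 0)
    (hν : ∀ t ∈ Set.Ici (0 : ℝ), ∀ y ∈ circPipe, (y 1) ^ 2 + (y 2) ^ 2 = 1 →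
      u t y 1 * y 1 + u t y 2 * y 2 = 0)
    (f h : ℝ → (Fin 3 → ℝ) → ℝ)
    (hf : ContDiff ℝ 1 (fun q : ℝ × (Fin 3 → ℝ) => f q.1 q.2))
    (hpde : ∀ t ∈ Set.Ici (0 : ℝ), ∀ y ∈ circPipe,
      deriv (fun s => f s y) t + ∑ i : Fin 3, u t y i * pd i (f t) y = h t y)
    (hinit : ∀ y ∈ circPipe, (y 1) ^ 2 + (y 2) ^ 2 = 1 → f 0 y = 0)
    (hedge : ∀ t ∈ Set.Ici (0 : ℝ), ∀ y ∈ circPipe,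
      y 0 = -1 → (y 1) ^ 2 + (y 2) ^ 2 = 1 → f t y = 0)
    (hh : ∀ t ∈ Set.Ici (0 : ℝ), ∀ y ∈ circPipe, (y 1) ^ 2 + (y 2) ^ 2 = 1 → h t y = 0) :
    ∀ t ∈ Set.Ici (0 : ℝ), ∀ y ∈ circPipe, (y 1) ^ 2 + (y 2) ^ 2 = 1 → f t y = 0 := by
  intro T hT y₀ hy₀ hy₀c
  -- the lateral boundary
  set S : Set (Fin 3 → ℝ) := {y | y 0 ∈ Set.Icc (-1 : ℝ) 1 ∧ (y 1) ^ 2 + (y 2) ^ 2 = 1}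
    with hSdef
  have hSsub : S ⊆ circPipe := fun y hy => ⟨hy.1, le_of_eq hy.2⟩
  -- S is compact
  have hSclosed : IsClosed S := by
    have h1 : IsClosed {y : Fin 3 → ℝ | y 0 ∈ Set.Icc (-1 : ℝ) 1} :=
      (isClosed_Icc).preimage (continuous_apply 0)
    have h2 : IsClosed {y : Fin 3 → ℝ | (y 1) ^ 2 + (y 2) ^ 2 = 1} :=
      isClosed_eq (((continuous_apply 1).pow 2).add ((continuous_apply 2).pow 2))
        continuous_const
    exact h1.inter h2
  have hScompact : IsCompact S := by
    refine (isCompact_closedBall (0 : Fin 3 → ℝ) 1).of_isClosed_subset hSclosed ?_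
    intro y hy
    rw [Metric.mem_closedBall, dist_zero_right]
    rw [pi_norm_le_iff_of_nonneg (by norm_num)]
    intro i
    have hc := hy.2
    have h0 := hy.1
    fin_cases i
    · show ‖y 0‖ ≤ 1
      rw [Real.norm_eq_abs, abs_le]; exact ⟨h0.1, h0.2⟩
    · show ‖y 1‖ ≤ 1
      rw [Real.norm_eq_abs, abs_le]; constructor <;> nlinarith [sq_nonneg (y 2)]
    · show ‖y 2‖ ≤ 1
      rw [Real.norm_eq_abs, abs_le]; constructor <;> nlinarith [sq_nonneg (y 1)]
  -- the compact space-time region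
  have hKcompact : IsCompact (Set.Icc (0 : ℝ) T ×ˢ S) := (isCompact_Icc).prod hScompact
  have hKne : (Set.Icc (0 : ℝ) T ×ˢ S).Nonempty :=
    ⟨(T, y₀), ⟨⟨hT, le_refl T⟩, ⟨hy₀.1, hy₀c⟩⟩⟩
  -- the weighted square
  set G : ℝ × (Fin 3 → ℝ) → ℝ := fun p => (f p.1 p.2) ^ 2 * Real.exp (-p.1) with hGdef
  have hGcont : Continuous G :=
    (hf.continuous.pow 2).mul ((continuous_fst.neg).rexp)
  obtain ⟨p, hpK, hpmax⟩ := hKcompact.exists_isMaxOn hKne hGcont.continuousOn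
  obtain ⟨t₁, y₁⟩ := p
  have ht₁ : t₁ ∈ Set.Icc (0 : ℝ) T := hpK.1
  have hy₁S : y₁ ∈ S := hpK.2
  have hy₁circ : (y₁ 1) ^ 2 + (y₁ 2) ^ 2 = 1 := hy₁S.2
  have hy₁pipe : y₁ ∈ circPipe := hSsub hy₁S
  have ht₁0 : (0 : ℝ) ≤ t₁ := ht₁.1
  have hmax : ∀ q ∈ Set.Icc (0 : ℝ) T ×ˢ S, G q ≤ G (t₁, y₁) := hpmax
  -- it suffices to show the max is ≤ 0
  suffices hG0 : G (t₁, y₁) ≤ 0 by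
    have h1 : G (T, y₀) ≤ 0 := le_trans (hmax (T, y₀) ⟨⟨hT, le_refl T⟩, ⟨hy₀.1, hy₀c⟩⟩) hG0
    have h2 : (0 : ℝ) < Real.exp (-T) := Real.exp_pos _
    have h3 : (f T y₀) ^ 2 ≤ 0 := by
      by_contra hcon
      push_neg at hcon
      have := mul_pos hcon h2
      simp only [hGdef] at h1
      linarith
    nlinarith [sq_nonneg (f T y₀)]
  by_contra hGpos
  push_neg at hGpos
  have hF2pos : (0 : ℝ) < (f t₁ y₁) ^ 2 := by
    have h2 : (0 : ℝ) < Real.exp (-t₁) := Real.exp_pos _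
    have hGpos' : (0 : ℝ) < (f t₁ y₁) ^ 2 * Real.exp (-t₁) := by
      simpa [hGdef] using hGpos
    by_contra hcon
    push_neg at hcon
    nlinarith [hGpos', h2, hcon]
  have hFne : f t₁ y₁ ≠ 0 := by
    intro h0; rw [h0] at hF2pos; simp at hF2pos
  -- t₁ > 0 and y₁ 0 > -1
  have ht₁pos : 0 < t₁ := by
    rcases lt_or_eq_of_le ht₁0 with h | h
    · exact h
    · exact absurd (hinit y₁ hy₁pipe hy₁circ ▸ (h ▸ rfl : f t₁ y₁ = f 0 y₁)) hFne
  have hy₁0 : -1 < y₁ 0 := by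
    rcases lt_or_eq_of_le hy₁S.1.1 with h | h
    · exact h
    · exact absurd (hedge t₁ ht₁0 y₁ hy₁pipe h.symm hy₁circ) hFne
  -- the joint derivative
  set joint : ℝ × (Fin 3 → ℝ) → ℝ := fun q => f q.1 q.2 with hjdef
  have hdiff : DifferentiableAt ℝ joint (t₁, y₁) := hf.differentiable one_ne_zero (t₁, y₁)
  set L := fderiv ℝ joint (t₁, y₁) with hLdef
  have hL : HasFDerivAt joint L (t₁, y₁) := hdiff.hasFDerivAt
  set F := f t₁ y₁ with hFdef
  -- time derivative
  have htc : HasDerivAt (fun s : ℝ => (s, y₁)) ((1 : ℝ), (0 : Fin 3 → ℝ)) t₁ :=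
    (hasDerivAt_id t₁).prodMk (hasDerivAt_const t₁ y₁)
  have hgt : HasDerivAt (fun s => f s y₁) (L (1, 0)) t₁ := by
    have := hL.comp_hasDerivAt t₁ htc
    simpa [Function.comp_def, hjdef] using this
  -- spatial partial derivatives
  have hpd : ∀ i : Fin 3,
      HasDerivAt (fun s => f t₁ (Function.update y₁ i s)) (L (0, Pi.single i 1)) (y₁ i) := by
    intro i
    have hc : HasDerivAt (fun s : ℝ => ((t₁ : ℝ), Function.update y₁ i s))
        ((0 : ℝ), (Pi.single i 1 : Fin 3 → ℝ)) (y₁ i) :=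
      (hasDerivAt_const (y₁ i) t₁).prodMk (hasDerivAt_update y₁ i (y₁ i))
    have hL' : HasFDerivAt joint L ((fun s : ℝ => ((t₁ : ℝ), Function.update y₁ i s)) (y₁ i)) := by
      simpa [Function.update_eq_self] using hL
    have := hL'.comp_hasDerivAt (y₁ i) hc
    simpa [Function.comp_def, hjdef] using this
  have hpdval : ∀ i : Fin 3, pd i (f t₁) y₁ = L (0, Pi.single i 1) := fun i =>
    (hpd i).deriv
  -- the PDE at the max point
  have hpde1 : L (1, 0) + ∑ i : Fin 3, u t₁ y₁ i * L (0, Pi.single i 1) = 0 := by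
    have := hpde t₁ ht₁0 y₁ hy₁pipe
    rw [hgt.deriv] at this
    simp only [hpdval] at this
    rw [this]
    exact hh t₁ ht₁0 y₁ hy₁pipe hy₁circ
  -- time direction: derivative of G along time at max is ≥ 0
  have hφ : HasDerivAt (fun s => (f s y₁) ^ 2 * Real.exp (-s))
      ((2 * F ^ 1 * L (1, 0)) * Real.exp (-t₁) + F ^ 2 * (Real.exp (-t₁) * (-1))) t₁ := by
    have h1 := hgt.fun_pow 2
    have h2 : HasDerivAt (fun s : ℝ => Real.exp (-s)) (Real.exp (-t₁) * (-1)) t₁ :=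
      (hasDerivAt_neg t₁).exp
    have := h1.fun_mul h2
    simpa [hFdef] using this
  have htime : 0 ≤ (2 * F ^ 1 * L (1, 0)) * Real.exp (-t₁) + F ^ 2 * (Real.exp (-t₁) * (-1)) := by
    refine deriv_nonneg_of_left_max ht₁pos hφ ?_
    intro s hs
    have := hmax (s, y₁) ⟨⟨hs.1, le_trans hs.2 ht₁.2⟩, hy₁S⟩
    simpa [hGdef] using this
  -- hence 2 F L(1,0) ≥ F²
  have htime' : F ^ 2 ≤ 2 * F * L (1, 0) := by
    have hex : (0 : ℝ) < Real.exp (-t₁) := Real.exp_pos _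
    nlinarith [htime]
  -- axial direction: 2 F L(0,e₀) ≥ 0
  have hax : 0 ≤ 2 * F * L (0, Pi.single 0 1) := by
    have hψ : HasDerivAt (fun s => (f t₁ (Function.update y₁ 0 s)) ^ 2)
        (2 * F ^ 1 * L (0, Pi.single 0 1)) (y₁ 0) := by
      have := (hpd 0).fun_pow 2
      simpa [hFdef] using this
    have hd : 0 ≤ 2 * F ^ 1 * L (0, Pi.single 0 1) := by
      refine deriv_nonneg_of_left_max hy₁0 hψ ?_
      intro s hs
      have hupd1 : Function.update y₁ 0 s 1 = y₁ 1 := Function.update_of_ne (by decide) _ _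
      have hupd2 : Function.update y₁ 0 s 2 = y₁ 2 := Function.update_of_ne (by decide) _ _
      have hupd0 : Function.update y₁ 0 s 0 = s := Function.update_self _ _ _
      have hmemS : Function.update y₁ 0 s ∈ S := by
        constructor
        · rw [hupd0]; exact ⟨hs.1, le_trans hs.2 hy₁S.1.2⟩
        · rw [hupd1, hupd2]; exact hy₁circ
      have := hmax (t₁, Function.update y₁ 0 s) ⟨ht₁, hmemS⟩
      have hself : Function.update y₁ 0 (y₁ 0) = y₁ := Function.update_eq_self _ _
      simp only [hGdef] at this
      have hex : (0 : ℝ) < Real.exp (-t₁) := Real.exp_pos _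
      rw [hself]
      exact le_of_mul_le_mul_right (by simpa using this) hex
    simpa using hd
  -- rotational direction: 2 F L(0,τ) = 0 where τ = (0, -y₂, y₁)
  set τ : Fin 3 → ℝ := ![0, -(y₁ 2), y₁ 1] with hτdef
  have hrot : 2 * F * L (0, τ) = 0 := by
    set c : ℝ → Fin 3 → ℝ := fun α =>
      ![y₁ 0, y₁ 1 * Real.cos α - y₁ 2 * Real.sin α,
        y₁ 1 * Real.sin α + y₁ 2 * Real.cos α] with hcdef
    have hc0 : c 0 = y₁ := by
      funext j
      fin_cases j <;> simp [hcdef]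
    have hcS : ∀ α, c α ∈ S := by
      intro α
      refine ⟨by simpa [hcdef] using hy₁S.1, ?_⟩
      show ((c α) 1) ^ 2 + ((c α) 2) ^ 2 = 1
      have e1 : (c α) 1 = y₁ 1 * Real.cos α - y₁ 2 * Real.sin α := by simp [hcdef]
      have e2 : (c α) 2 = y₁ 1 * Real.sin α + y₁ 2 * Real.cos α := by simp [hcdef]
      rw [e1, e2]
      have hsc := Real.sin_sq_add_cos_sq α
      linear_combination (Real.cos α ^ 2 + Real.sin α ^ 2) * hy₁circ + hsc
    have hcd : HasDerivAt c τ 0 := by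
      rw [hasDerivAt_pi]
      intro i
      fin_cases i
      · simpa [hcdef, hτdef] using (hasDerivAt_const (0:ℝ) (y₁ 0))
      · have h1 : HasDerivAt (fun α => y₁ 1 * Real.cos α - y₁ 2 * Real.sin α)
            (y₁ 1 * (-Real.sin 0) - y₁ 2 * Real.cos 0) 0 :=
          ((Real.hasDerivAt_cos 0).const_mul (y₁ 1)).sub
            ((Real.hasDerivAt_sin 0).const_mul (y₁ 2))
        have h1' : HasDerivAt (fun α => y₁ 1 * Real.cos α - y₁ 2 * Real.sin α)
            (-(y₁ 2)) 0 := by simpa using h1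
        simpa [hcdef, hτdef] using h1'
      · have h1 : HasDerivAt (fun α => y₁ 1 * Real.sin α + y₁ 2 * Real.cos α)
            (y₁ 1 * Real.cos 0 + y₁ 2 * (-Real.sin 0)) 0 :=
          ((Real.hasDerivAt_sin 0).const_mul (y₁ 1)).add
            ((Real.hasDerivAt_cos 0).const_mul (y₁ 2))
        have h1' : HasDerivAt (fun α => y₁ 1 * Real.sin α + y₁ 2 * Real.cos α)
            (y₁ 1) 0 := by simpa using h1
        simpa [hcdef, hτdef] using h1'
    have hcc : HasDerivAt (fun α : ℝ => ((t₁ : ℝ), c α)) ((0 : ℝ), τ) 0 :=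
      (hasDerivAt_const (0:ℝ) t₁).prodMk hcd
    have hgc : HasDerivAt (fun α => f t₁ (c α)) (L (0, τ)) 0 := by
      have hLc : HasFDerivAt joint L (t₁, c 0) := by rw [hc0]; exact hL
      have := hLc.comp_hasDerivAt 0 hcc
      simpa [Function.comp_def, hjdef] using this
    have hρ : HasDerivAt (fun α => (f t₁ (c α)) ^ 2) (2 * F ^ 1 * L (0, τ)) 0 := by
      have := hgc.fun_pow 2
      simpa [hc0, hFdef] using this
    have hloc : IsLocalMax (fun α => (f t₁ (c α)) ^ 2) 0 := by
      have hall : ∀ α, (f t₁ (c α)) ^ 2 ≤ (f t₁ (c 0)) ^ 2 := by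
        intro α
        have := hmax (t₁, c α) ⟨ht₁, hcS α⟩
        simp only [hGdef] at this
        have hex : (0 : ℝ) < Real.exp (-t₁) := Real.exp_pos _
        rw [hc0]
        exact le_of_mul_le_mul_right (by simpa using this) hex
      exact Filter.Eventually.of_forall hall
    have := hloc.hasDerivAt_eq_zero hρ
    simpa using this
  -- decompose u into axial and rotational parts
  set a : ℝ := u t₁ y₁ 2 * y₁ 1 - u t₁ y₁ 1 * y₁ 2 with hadef
  have hν1 : u t₁ y₁ 1 * y₁ 1 + u t₁ y₁ 2 * y₁ 2 = 0 := hν t₁ ht₁0 y₁ hy₁pipe hy₁circ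
  have hu1' : a * (-(y₁ 2)) = u t₁ y₁ 1 := by
    rw [hadef]; linear_combination (-(y₁ 1)) * hν1 + (u t₁ y₁ 1) * hy₁circ
  have hu2' : a * (y₁ 1) = u t₁ y₁ 2 := by
    rw [hadef]; linear_combination (-(y₁ 2)) * hν1 + (u t₁ y₁ 2) * hy₁circ
  -- decompose the transport term
  have hsum : ∑ i : Fin 3, u t₁ y₁ i * L (0, Pi.single i 1)
      = u t₁ y₁ 0 * L (0, Pi.single 0 1) + a * L (0, τ) := by
    have hτeq : ((0 : ℝ), τ) = (-(y₁ 2)) • ((0:ℝ), (Pi.single 1 1 : Fin 3 → ℝ))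
        + (y₁ 1) • ((0:ℝ), (Pi.single 2 1 : Fin 3 → ℝ)) := by
      refine Prod.ext (by simp) ?_
      funext j
      fin_cases j <;> simp [hτdef]
    have hLτ : L (0, τ) = (-(y₁ 2)) * L (0, Pi.single 1 1) + (y₁ 1) * L (0, Pi.single 2 1) := by
      rw [hτeq, map_add, map_smul, map_smul]
      simp
    rw [Fin.sum_univ_three, hLτ]
    have e1 : u t₁ y₁ 1 = a * (-(y₁ 2)) := hu1'.symm
    have e2 : u t₁ y₁ 2 = a * (y₁ 1) := hu2'.symm
    rw [e1, e2]
    ring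
  -- conclude
  have hkey : 2 * F * L (1, 0)
      = -(u t₁ y₁ 0 * (2 * F * L (0, Pi.single 0 1))) - a * (2 * F * L (0, τ)) := by
    have : L (1, 0) = -(u t₁ y₁ 0 * L (0, Pi.single 0 1)) - a * L (0, τ) := by
      have := hpde1
      rw [hsum] at this
      linarith
    rw [this]; ring
  have hu0pos : 0 < u t₁ y₁ 0 := lt_of_lt_of_le hc₁ (hu1 t₁ ht₁0 y₁ hy₁pipe)
  have hfinal : 2 * F * L (1, 0) ≤ 0 := by
    rw [hkey, hrot]
    have := mul_nonneg (le_of_lt hu0pos) hax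
    linarith
  linarith [hF2pos, htime', hfinal]
end
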